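/- arXiv:1003.5748 — 5 statements merged into one kernel-verified Lean document; each statement's English description precedes it below -/
import Mathlib

section
/- Let f : ℝ → ℂ be continuously differentiable, 2π-periodic, with |f(t)| = 1 for all t, and let a_n = (1/2π)∫₀^{2π} f(t) e^{-int} dt be its Fourier coefficients. Then the winding number of f, namely deg f = (1/2πi)∫₀^{2π} f'(t)/f(t) dt, satisfies deg f = ∑_{n ∈ ℤ} n |a_n|². -/
open MeasureTheory Real Complex Filter

/-- Fourier coefficient of a `2π`-periodic function. -/
noncomputable def fourierCoef (f : ℝ → ℂ) (n : ℤ) : ℂ :=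
  (1 / (2 * Real.pi)) * ∫ t in (0:ℝ)..(2 * Real.pi),
    f t * Complex.exp (-(n : ℂ) * Complex.I * (t : ℂ))

/-- Winding number (topological degree) of a `C¹` unimodular loop. -/
noncomputable def degC1 (f : ℝ → ℂ) : ℂ :=
  (1 / (2 * Real.pi * Complex.I)) * ∫ t in (0:ℝ)..(2 * Real.pi),
    deriv f t * (starRingEnd ℂ) (f t)

lemma aux_fourier_eq' (n : ℤ) (x : ℝ) :
    (fourier (-n) (x : AddCircle (2 * Real.pi)) : ℂ) = Complex.exp (-(n:ℂ) * Complex.I * x) := by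
  rw [fourier_coe_apply]
  congr 1
  have hπ : (Real.pi : ℂ) ≠ 0 := Complex.ofReal_ne_zero.mpr Real.pi_ne_zero
  push_cast
  field_simp

section
local instance : Fact (0 < 2 * Real.pi) := ⟨by positivity⟩

/-- `Periodic.lift` agrees with `liftIco`. -/
lemma lift_eq_liftIco (g : ℝ → ℂ) (hg : Function.Periodic g (2 * Real.pi)) :
    hg.lift = AddCircle.liftIco (2 * Real.pi) 0 g := by
  funext z
  obtain ⟨x, hx, rfl⟩ := AddCircle.eq_coe_Ico z
  rw [Function.Periodic.lift_coe, AddCircle.liftIco_zero_coe_apply hx]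

lemma lift_continuous (g : ℝ → ℂ) (hg : Function.Periodic g (2 * Real.pi))
    (hc : Continuous g) : Continuous hg.lift := by
  rw [lift_eq_liftIco]
  exact AddCircle.liftIco_zero_continuous (by simpa using (hg 0).symm) hc.continuousOn

/-- Fourier coefficient of the lift equals `fourierCoef`. -/
lemma fourierCoeff_lift (g : ℝ → ℂ) (hg : Function.Periodic g (2 * Real.pi)) (n : ℤ) :
    fourierCoeff hg.lift n = fourierCoef g n := by
  rw [fourierCoeff_eq_intervalIntegral _ n 0, fourierCoef]
  rw [zero_add]
  have : (fun x : ℝ => fourier (-n) (x : AddCircle (2 * Real.pi)) • hg.lift x)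
      = fun x : ℝ => g x * Complex.exp (-(n:ℂ) * Complex.I * x) := by
    funext x
    rw [smul_eq_mul, aux_fourier_eq', Function.Periodic.lift_coe, mul_comm]
  rw [this]
  rw [Complex.real_smul]
  push_cast
  ring
end

section coefderiv

/-- Fourier coefficient of the derivative. -/
lemma fourierCoef_deriv (f : ℝ → ℂ) (hf : ContDiff ℝ 1 f)
    (hper : Function.Periodic f (2 * Real.pi)) (n : ℤ) :
    fourierCoef (deriv f) n = Complex.I * n * fourierCoef f n := by
  have hπ : (0:ℝ) < 2 * Real.pi := by positivity
  have hdiff : ∀ x ∈ Set.uIcc (0:ℝ) (2 * Real.pi), HasDerivAt f (deriv f x) x :=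
    fun x _ => (hf.differentiable one_ne_zero x).hasDerivAt
  have hint : IntervalIntegrable (deriv f) volume 0 (2 * Real.pi) :=
    (hf.continuous_deriv le_rfl).intervalIntegrable _ _
  have hf20 : f (2 * Real.pi) = f 0 := by simpa using hper 0
  rcases eq_or_ne n 0 with rfl | hn
  · have : (fun t : ℝ => deriv f t * Complex.exp (-((0:ℤ):ℂ) * Complex.I * t))
        = deriv f := by funext t; simp
    rw [fourierCoef, this, intervalIntegral.integral_deriv_eq_sub
      (fun x hx => hf.differentiable one_ne_zero x) hint, hf20]
    simp
  · -- use the integration by parts lemma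
    have key := fourierCoeffOn_of_hasDerivAt hπ hn hdiff hint
    -- convert fourierCoeffOn to fourierCoef
    have conv : ∀ g : ℝ → ℂ, fourierCoeffOn hπ g n = fourierCoef g n := by
      intro g
      rw [fourierCoeffOn_eq_integral, fourierCoef]
      have h20 : (2 * Real.pi - 0) = 2 * Real.pi := by ring
      rw [h20]
      have : (fun x : ℝ => fourier (-n) (x : AddCircle (2 * Real.pi)) • g x)
          = fun x : ℝ => g x * Complex.exp (-(n:ℂ) * Complex.I * x) := by
        funext x
        rw [smul_eq_mul, aux_fourier_eq', mul_comm]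
      rw [this, Complex.real_smul]
      push_cast
      ring
    rw [conv, conv] at key
    rw [hf20, sub_self, mul_zero, zero_sub] at key
    push_cast at key
    have hπC : ((Real.pi:ℂ)) ≠ 0 := Complex.ofReal_ne_zero.mpr Real.pi_ne_zero
    have h2π : (2 * (Real.pi:ℂ)) ≠ 0 := by simp [hπC]
    have hIn : (-2 * (Real.pi:ℂ) * Complex.I * n) ≠ 0 := by
      simp [Complex.ofReal_ne_zero, Real.pi_ne_zero, Complex.I_ne_zero, hn]
    have hIn' : (2 * (Real.pi:ℂ) * Complex.I * n) ≠ 0 := by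
      simp [Complex.ofReal_ne_zero, Real.pi_ne_zero, Complex.I_ne_zero, hn]
    field_simp at key
    apply mul_left_cancel₀ h2π
    linear_combination -key
end coefderiv

theorem brezis_degree_formula (f : ℝ → ℂ)
    (hf : ContDiff ℝ 1 f) (hper : Function.Periodic f (2 * Real.pi))
    (hmod : ∀ t, ‖f t‖ = 1) :
    HasSum (fun n : ℤ => (n : ℂ) * (‖fourierCoef f n‖ : ℂ) ^ 2) (degC1 f) := by
  haveI : Fact (0 < 2 * Real.pi) := ⟨by positivity⟩
  have hfc : Continuous f := hf.continuous
  have hf'c : Continuous (deriv f) := hf.continuous_deriv le_rfl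
  have hper' : Function.Periodic (deriv f) (2 * Real.pi) := by
    intro x
    rw [← deriv_comp_add_const]
    congr 1
    funext y
    exact hper y
  set F : C(AddCircle (2 * Real.pi), ℂ) := ⟨hper.lift, lift_continuous f hper hfc⟩ with hF
  set G : C(AddCircle (2 * Real.pi), ℂ) := ⟨hper'.lift, lift_continuous _ hper' hf'c⟩ with hG
  set FL := ContinuousMap.toLp 2 AddCircle.haarAddCircle ℂ F with hFL
  set Glp := ContinuousMap.toLp 2 AddCircle.haarAddCircle ℂ G with hGlp
  have hs := fourierBasis.hasSum_inner_mul_inner FL Glp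
  have h1 : ∀ n : ℤ, (inner ℂ (fourierBasis n) FL : ℂ) = fourierCoef f n := by
    intro n
    rw [← fourierBasis.repr_apply_apply, fourierBasis_repr, hFL, fourierCoeff_toLp]
    exact fourierCoeff_lift f hper n
  have h2 : ∀ n : ℤ, (inner ℂ (fourierBasis n) Glp : ℂ) = Complex.I * n * fourierCoef f n := by
    intro n
    rw [← fourierBasis.repr_apply_apply, fourierBasis_repr, hGlp, fourierCoeff_toLp]
    rw [show (⇑G) = hper'.lift from rfl, fourierCoeff_lift _ hper' n]
    exact fourierCoef_deriv f hf hper n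
  have hterm : ∀ n : ℤ, (inner ℂ FL (fourierBasis n) : ℂ) * inner ℂ (fourierBasis n) Glp
      = Complex.I * ((n:ℂ) * (‖fourierCoef f n‖ : ℂ) ^ 2) := by
    intro n
    rw [← inner_conj_symm, h1, h2]
    have hc : (starRingEnd ℂ) (fourierCoef f n) * fourierCoef f n
        = (‖fourierCoef f n‖ : ℂ) ^ 2 := by
      rw [mul_comm, Complex.mul_conj, Complex.normSq_eq_norm_sq]
      push_cast
      ring
    calc (starRingEnd ℂ) (fourierCoef f n) * (Complex.I * n * fourierCoef f n)
        = Complex.I * ((n:ℂ) * ((starRingEnd ℂ) (fourierCoef f n) * fourierCoef f n)) := by ring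
      _ = Complex.I * ((n:ℂ) * (‖fourierCoef f n‖ : ℂ) ^ 2) := by rw [hc]
  have hip : (inner ℂ FL Glp : ℂ) = (1 / (2 * (Real.pi:ℂ))) *
      ∫ t in (0:ℝ)..(2 * Real.pi), (starRingEnd ℂ) (f t) * deriv f t := by
    rw [MeasureTheory.L2.inner_def]
    have hae : (fun t => (inner ℂ (FL t) (Glp t) : ℂ))
        =ᵐ[(AddCircle.haarAddCircle : Measure (AddCircle (2 * Real.pi)))]
        fun t => (starRingEnd ℂ) (F t) * G t := by
      filter_upwards [ContinuousMap.coeFn_toLp (p := 2) AddCircle.haarAddCircle (𝕜 := ℂ) F,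
        ContinuousMap.coeFn_toLp (p := 2) AddCircle.haarAddCircle (𝕜 := ℂ) G] with t htF htG
      rw [htF, htG]
      simp [RCLike.inner_apply, mul_comm]
    rw [integral_congr_ae hae]
    have h0 : (∫ t, (starRingEnd ℂ) (F t) * G t ∂(AddCircle.haarAddCircle : Measure (AddCircle (2 * Real.pi))))
        = fourierCoeff (fun t : AddCircle (2 * Real.pi) => (starRingEnd ℂ) (F t) * G t) 0 := by
      rw [fourierCoeff]
      apply integral_congr_ae
      filter_upwards with t
      rw [neg_zero, fourier_zero, one_smul]
    rw [h0, fourierCoeff_eq_intervalIntegral _ 0 0, zero_add]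
    have : (fun x : ℝ => fourier (-0 : ℤ) (x : AddCircle (2 * Real.pi)) •
        ((starRingEnd ℂ) (F (x : AddCircle (2 * Real.pi))) * G (x : AddCircle (2 * Real.pi))))
        = fun x : ℝ => (starRingEnd ℂ) (f x) * deriv f x := by
      funext x
      rw [neg_zero, fourier_zero, one_smul]
      rw [show (F (x : AddCircle (2 * Real.pi))) = f x from hper.lift_coe x,
        show (G (x : AddCircle (2 * Real.pi))) = deriv f x from hper'.lift_coe x]
    rw [this, Complex.real_smul]
    push_cast
    ring
  have hs2 : HasSum (fun n : ℤ => Complex.I * ((n:ℂ) * (‖fourierCoef f n‖ : ℂ) ^ 2))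
      ((1 / (2 * (Real.pi:ℂ))) * ∫ t in (0:ℝ)..(2 * Real.pi), (starRingEnd ℂ) (f t) * deriv f t) := by
    rw [← hip]
    simp only [hterm] at hs
    exact hs
  have hs3 := hs2.mul_left (Complex.I)⁻¹
  have hfun : (fun n : ℤ => Complex.I⁻¹ * (Complex.I * ((n:ℂ) * (‖fourierCoef f n‖ : ℂ) ^ 2)))
      = fun n : ℤ => (n:ℂ) * (‖fourierCoef f n‖ : ℂ) ^ 2 := by
    funext n
    rw [← mul_assoc, inv_mul_cancel₀ Complex.I_ne_zero, one_mul]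
  rw [hfun] at hs3
  convert hs3 using 1
  · rfl
  rw [degC1]
  have hcomm : (∫ t in (0:ℝ)..(2 * Real.pi), deriv f t * (starRingEnd ℂ) (f t))
      = ∫ t in (0:ℝ)..(2 * Real.pi), (starRingEnd ℂ) (f t) * deriv f t :=
    intervalIntegral.integral_congr fun t _ => mul_comm _ _
  rw [hcomm]
  have hπC : ((Real.pi:ℂ)) ≠ 0 := Complex.ofReal_ne_zero.mpr Real.pi_ne_zero
  field_simp
end

section
/- If a series ∑_{m≥1} u_m of complex numbers converges to s in the Cesàro sense (C,k) for some k ≥ 0, then it is Abel summable to s: lim_{r→1⁻} ∑_{m≥1} u_m r^m = s. -/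
open Filter Finset

namespace CesaroAbelAux

/-- shift: `sh a = (0, a 0, a 1, ...)`. -/
def sh (a : ℕ → ℂ) : ℕ → ℂ := fun n => match n with
  | 0 => 0
  | (m+1) => a m

/-- difference operator -/
def Td (a : ℕ → ℂ) : ℕ → ℂ := fun n => a n - sh a n

lemma sh_summable {a : ℕ → ℂ} {r : ℂ} (h : Summable fun n => a n * r ^ n) :
    Summable (fun n => sh a n * r ^ n) := by
  apply (summable_nat_add_iff 1).1
  have := h.mul_right r
  apply this.congr
  intro n
  simp [sh, pow_succ]; ring

lemma sh_tsum {a : ℕ → ℂ} {r : ℂ} (h : Summable fun n => a n * r ^ n) :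
    ∑' n, sh a n * r ^ n = r * ∑' n, a n * r ^ n := by
  rw [Summable.tsum_eq_zero_add (sh_summable h)]
  have : ∀ n : ℕ, sh a (n+1) * r ^ (n+1) = (a n * r ^ n) * r := by
    intro n; simp [sh, pow_succ]; ring
  simp only [this]
  rw [tsum_mul_right]
  simp [sh]; ring

lemma Td_summable {a : ℕ → ℂ} {r : ℂ} (h : Summable fun n => a n * r ^ n) :
    Summable (fun n => Td a n * r ^ n) := by
  have := h.sub (sh_summable h)
  apply this.congr; intro n; simp [Td]; ring

lemma Td_tsum {a : ℕ → ℂ} {r : ℂ} (h : Summable fun n => a n * r ^ n) :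
    ∑' n, Td a n * r ^ n = (1 - r) * ∑' n, a n * r ^ n := by
  have e : ∀ n : ℕ, Td a n * r ^ n = a n * r ^ n - sh a n * r ^ n := by
    intro n; simp [Td]; ring
  simp only [e]
  rw [Summable.tsum_sub h (sh_summable h), sh_tsum h]; ring

lemma Td_iter {a : ℕ → ℂ} {r : ℂ} (j : ℕ) (h : Summable fun n => a n * r ^ n) :
    Summable (fun n => Td^[j] a n * r ^ n) ∧
      ∑' n, Td^[j] a n * r ^ n = (1 - r) ^ j * ∑' n, a n * r ^ n := by
  induction j generalizing a with
  | zero => simpa using h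
  | succ j ih =>
    have h1 := Td_summable h
    obtain ⟨hs, ht⟩ := ih h1
    constructor
    · simpa [Function.iterate_succ_apply] using hs
    · rw [Function.iterate_succ_apply] at *
      rw [ht, Td_tsum h, pow_succ]; ring

/-- Cesàro numerator of order `j`. -/
noncomputable def S (u : ℕ → ℂ) (j : ℕ) : ℕ → ℂ :=
  fun n => ∑ m ∈ Finset.Icc 1 n, ((n + j - m).choose j : ℂ) * u m

lemma S_succ_eq (u : ℕ → ℂ) (j n : ℕ) :
    S u (j+1) n = ∑ m ∈ Finset.Icc 1 (n+1), ((n + j + 1 - m).choose (j+1) : ℂ) * u m := by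
  rw [Finset.sum_Icc_succ_top (by omega)]
  have : n + j + 1 - (n + 1) = j := by omega
  rw [this, Nat.choose_eq_zero_of_lt (by omega)]
  simp only [Nat.cast_zero, zero_mul, add_zero, S]
  apply Finset.sum_congr rfl
  intro m hm
  have e : n + (j+1) - m = n + j + 1 - m := by omega
  rw [e]

lemma Td_S (u : ℕ → ℂ) (j : ℕ) : Td (S u (j+1)) = S u j := by
  funext n
  match n with
  | 0 => simp [Td, sh, S]
  | (n+1) =>
    show S u (j+1) (n+1) - S u (j+1) n = S u j (n+1)
    rw [S_succ_eq u j n]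
    have e1 : S u (j+1) (n+1) =
        ∑ m ∈ Finset.Icc 1 (n+1), ((n + j + 2 - m).choose (j+1) : ℂ) * u m := by
      unfold S
      apply Finset.sum_congr rfl
      intro m hm
      congr 3
      omega
    rw [e1, ← Finset.sum_sub_distrib]
    apply Finset.sum_congr rfl
    intro m hm
    rw [Finset.mem_Icc] at hm
    have e2 : n + j + 2 - m = (n + j + 1 - m) + 1 := by omega
    have e3 : n + 1 + j - m = n + j + 1 - m := by omega
    rw [e2, e3, Nat.choose_succ_succ]
    push_cast
    ring

lemma Td_iter_S (u : ℕ → ℂ) (j : ℕ) : Td^[j] (S u j) = S u 0 := by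
  induction j with
  | zero => simp
  | succ j ih => rw [Function.iterate_succ_apply, Td_S, ih]

lemma Td_S0_zero (u : ℕ → ℂ) : Td (S u 0) 0 = 0 := by simp [Td, sh, S]

lemma Td_S0_succ (u : ℕ → ℂ) (n : ℕ) : Td (S u 0) (n+1) = u (n+1) := by
  show S u 0 (n+1) - S u 0 n = u (n+1)
  unfold S
  rw [Finset.sum_Icc_succ_top (by omega)]
  simp

variable {u : ℕ → ℂ} {k : ℕ}

lemma S_eq (u : ℕ → ℂ) (k : ℕ) {c : ℕ → ℂ}
    (hc : c = fun n => (((n + k).choose k : ℂ))⁻¹ * S u k n) (n : ℕ) :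
    S u k n = ((n + k).choose k : ℂ) * c n := by
  have hne : (((n + k).choose k : ℂ)) ≠ 0 := by
    have := Nat.choose_pos (show k ≤ n + k by omega)
    exact_mod_cast this.ne'
  rw [hc]
  rw [← mul_assoc, mul_inv_cancel₀ hne, one_mul]

end CesaroAbelAux

set_option maxHeartbeats 1000000 in
open CesaroAbelAux in
/-- Cesàro `(C,k)` summability implies Abel summability. -/
theorem cesaro_implies_abel (u : ℕ → ℂ) (s : ℂ) (k : ℕ)
    (hC : Tendsto (fun n : ℕ =>
        (((n + k).choose k : ℂ))⁻¹ *
          ∑ m ∈ Finset.Icc 1 n, (((n + k - m).choose k : ℂ)) * u m)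
      atTop (nhds s)) :
    (∀ r : ℝ, r ∈ Set.Ioo (0:ℝ) 1 →
        Summable (fun m : ℕ => u (m + 1) * (r : ℂ) ^ (m + 1))) ∧
      Tendsto (fun r : ℝ => ∑' m : ℕ, u (m + 1) * (r : ℂ) ^ (m + 1))
        (nhdsWithin 1 (Set.Iio 1)) (nhds s) := by
  set c : ℕ → ℂ := fun n => (((n + k).choose k : ℂ))⁻¹ * S u k n with hcdef
  have hC' : Tendsto c atTop (nhds s) := hC
  have hSc : ∀ n, S u k n = ((n + k).choose k : ℂ) * c n := S_eq u k hcdef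
  -- uniform bound on `c`
  obtain ⟨M, hM⟩ := hC'.norm.bddAbove_range
  have hMc : ∀ n, ‖c n‖ ≤ M := fun n => hM ⟨n, rfl⟩
  have hM0 : 0 ≤ M := le_trans (norm_nonneg _) (hMc 0)
  -- summability of the Cesàro numerators against geometric weights
  have hSsum : ∀ r : ℂ, ‖r‖ < 1 → Summable (fun n => S u k n * r ^ n) := by
    intro r hr
    have hg : Summable (fun n : ℕ => M * (((n + k).choose k : ℝ) * ‖r‖ ^ n)) :=
      (summable_choose_mul_geometric_of_norm_lt_one k (by simpa using hr)).mul_left M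
    apply Summable.of_norm_bounded hg
    intro n
    rw [hSc n, norm_mul, norm_mul]
    have h1 : ‖(((n + k).choose k : ℕ) : ℂ)‖ = ((n + k).choose k : ℝ) := by simp
    rw [h1, norm_pow]
    calc ((n + k).choose k : ℝ) * ‖c n‖ * ‖r‖ ^ n
        ≤ ((n + k).choose k : ℝ) * M * ‖r‖ ^ n := by
          gcongr
          exact hMc n
      _ = M * (((n + k).choose k : ℝ) * ‖r‖ ^ n) := by ring
  -- the key power series identity
  have key : ∀ r : ℂ, ‖r‖ < 1 → Summable (fun m : ℕ => u (m + 1) * r ^ (m + 1)) ∧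
      ∑' m : ℕ, u (m + 1) * r ^ (m + 1) = (1 - r) ^ (k + 1) * ∑' n, S u k n * r ^ n := by
    intro r hr
    obtain ⟨hv, htv⟩ := Td_iter (k+1) (hSsum r hr)
    have hvS : Td^[k+1] (S u k) = Td (S u 0) := by
      rw [Function.iterate_succ_apply', Td_iter_S]
    rw [hvS] at hv htv
    have hsum1 : Summable (fun m : ℕ => u (m + 1) * r ^ (m + 1)) := by
      have h2 := (summable_nat_add_iff (f := fun n => Td (S u 0) n * r ^ n) 1).2 hv
      apply h2.congr
      intro n
      rw [Td_S0_succ]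
    refine ⟨hsum1, ?_⟩
    rw [← htv, Summable.tsum_eq_zero_add hv, Td_S0_zero]
    simp only [Td_S0_succ, pow_zero, zero_mul, zero_add]
  constructor
  · intro r hr
    exact (key r (by rw [Complex.norm_real]; exact abs_lt.2 ⟨by linarith [hr.1], hr.2⟩)).1
  -- the limit
  rw [Metric.tendsto_nhds]
  intro ε hε
  obtain ⟨N, hN⟩ := Metric.tendsto_atTop.1 hC' (ε/4) (by positivity)
  set B : ℝ := ∑ n ∈ Finset.range N, ((n + k).choose k : ℝ) * (M + ‖s‖) with hBdef
  have hB0 : 0 ≤ B := Finset.sum_nonneg fun n _ => by positivity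
  have hIoo : ∀ᶠ r : ℝ in nhdsWithin 1 (Set.Iio 1), r ∈ Set.Ioo (0:ℝ) 1 :=
    Ioo_mem_nhdsLT_of_mem (by constructor <;> norm_num)
  have htend : Tendsto (fun r : ℝ => (1 - r)^(k+1) * B) (nhdsWithin 1 (Set.Iio 1)) (nhds 0) := by
    have h0 : Tendsto (fun r : ℝ => (1 - r)^(k+1) * B) (nhds 1) (nhds ((1-1)^(k+1) * B)) := by
      exact (((continuous_const.sub continuous_id).pow (k+1)).mul continuous_const).tendsto 1
    simpa using h0.mono_left nhdsWithin_le_nhds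
  have hsm : ∀ᶠ r : ℝ in nhdsWithin 1 (Set.Iio 1), (1 - r)^(k+1) * B < ε/2 :=
    htend.eventually_lt_const (by positivity)
  filter_upwards [hIoo, hsm] with r hr hrB
  obtain ⟨hr0, hr1⟩ := hr
  have hrc : ‖(r:ℂ)‖ < 1 := by rw [Complex.norm_real]; exact abs_lt.2 ⟨by linarith, hr1⟩
  obtain ⟨hsum1, hid⟩ := key (r:ℂ) hrc
  rw [dist_eq_norm, hid]
  -- the complex choose sum
  have hch : HasSum (fun n : ℕ => (((n + k).choose k : ℕ) : ℂ) * (r:ℂ) ^ n)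
      (1 / (1 - (r:ℂ))^(k+1)) := hasSum_choose_mul_geometric_of_norm_lt_one k hrc
  have h1rc : (1 : ℂ) - (r:ℂ) ≠ 0 := by
    intro h
    have : (r:ℂ) = 1 := by linear_combination -h
    have : r = 1 := by exact_mod_cast this
    linarith
  have hs_eq : s = (1 - (r:ℂ))^(k+1) * ∑' n : ℕ, (((n + k).choose k : ℕ) : ℂ) * (r:ℂ)^n * s := by
    rw [tsum_mul_right, hch.tsum_eq]
    field_simp
  have hCs_sum : Summable (fun n : ℕ => (((n + k).choose k : ℕ) : ℂ) * (r:ℂ)^n * s) :=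
    hch.summable.mul_right s
  have hdiff : (1 - (r:ℂ))^(k+1) * (∑' n, S u k n * (r:ℂ)^n) - s
      = (1 - (r:ℂ))^(k+1) * ∑' n, (((n + k).choose k : ℕ) : ℂ) * (c n - s) * (r:ℂ)^n := by
    conv_lhs => rw [hs_eq]
    rw [← mul_sub, ← Summable.tsum_sub (hSsum _ hrc) hCs_sum]
    congr 1
    apply tsum_congr
    intro n
    rw [hSc n]
    ring
  rw [hdiff]
  -- real-valued estimates
  set D : ℕ → ℝ := fun n => ((n + k).choose k : ℝ) * ‖c n - s‖ * r ^ n with hDdef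
  have hrabs : ‖(r:ℂ)‖ = r := by rw [Complex.norm_real, Real.norm_eq_abs, abs_of_pos hr0]
  have hchR : HasSum (fun n : ℕ => (((n + k).choose k : ℕ) : ℝ) * r ^ n)
      (1 / (1 - r)^(k+1)) := by
    apply hasSum_choose_mul_geometric_of_norm_lt_one k
    rw [Real.norm_eq_abs]; exact abs_lt.2 ⟨by linarith, hr1⟩
  have hcs_bound : ∀ n, ‖c n - s‖ ≤ M + ‖s‖ := fun n =>
    le_trans (norm_sub_le _ _) (by linarith [hMc n])
  have hD0 : ∀ n, 0 ≤ D n := fun n => by positivity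
  have hgR : Summable (fun n : ℕ => (M + ‖s‖) * ((((n + k).choose k : ℕ) : ℝ) * r ^ n)) :=
    hchR.summable.mul_left _
  have hDsum : Summable D := by
    apply Summable.of_nonneg_of_le hD0 _ hgR
    intro n
    rw [hDdef]
    calc ((n + k).choose k : ℝ) * ‖c n - s‖ * r ^ n
        ≤ ((n + k).choose k : ℝ) * (M + ‖s‖) * r ^ n := by
          have h1 : (0:ℝ) ≤ ((n + k).choose k : ℝ) := by positivity
          have h2 : (0:ℝ) ≤ r ^ n := by positivity
          exact mul_le_mul_of_nonneg_right
            (mul_le_mul_of_nonneg_left (hcs_bound n) h1) h2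
      _ = (M + ‖s‖) * (((n + k).choose k : ℝ) * r ^ n) := by ring
  have hfn : ∀ n : ℕ, ‖(((n + k).choose k : ℕ) : ℂ) * (c n - s) * (r:ℂ)^n‖ = D n := by
    intro n
    rw [norm_mul, norm_mul, norm_pow, hrabs]
    congr 2
    simp
  have hnorm_le : ‖∑' n, (((n + k).choose k : ℕ) : ℂ) * (c n - s) * (r:ℂ)^n‖ ≤ ∑' n, D n := by
    calc ‖∑' n, (((n + k).choose k : ℕ) : ℂ) * (c n - s) * (r:ℂ)^n‖
        ≤ ∑' n, ‖(((n + k).choose k : ℕ) : ℂ) * (c n - s) * (r:ℂ)^n‖ := by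
          apply norm_tsum_le_tsum_norm
          exact hDsum.congr fun n => (hfn n).symm
      _ = ∑' n, D n := tsum_congr hfn
  -- split at N
  have hsplit := Summable.sum_add_tsum_nat_add N hDsum
  have hhead : ∑ n ∈ Finset.range N, D n ≤ B := by
    apply Finset.sum_le_sum
    intro n _
    rw [hDdef]
    calc ((n + k).choose k : ℝ) * ‖c n - s‖ * (r:ℝ) ^ n
        ≤ ((n + k).choose k : ℝ) * (M + ‖s‖) * 1 := by
          have hb := hcs_bound n
          have hp : r ^ n ≤ 1 := pow_le_one₀ (le_of_lt hr0) (le_of_lt hr1)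
          have h1 : (0:ℝ) ≤ ((n + k).choose k : ℝ) := by positivity
          have h2 : (0:ℝ) ≤ r ^ n := by positivity
          exact mul_le_mul (mul_le_mul_of_nonneg_left hb h1) hp h2
            (mul_nonneg h1 (by linarith [norm_nonneg s]))
      _ = ((n + k).choose k : ℝ) * (M + ‖s‖) := by ring
  have htail : ∑' n : ℕ, D (n + N) ≤ (ε/4) * (1 / (1 - r)^(k+1)) := by
    have hshift : Summable (fun n : ℕ => (((n + N + k).choose k : ℕ) : ℝ) * r ^ (n + N)) :=
      (summable_nat_add_iff (f := fun n : ℕ => (((n + k).choose k : ℕ) : ℝ) * r ^ n) N).2 hchR.summable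
    calc ∑' n : ℕ, D (n + N)
        ≤ ∑' n : ℕ, (ε/4) * ((((n + N + k).choose k : ℕ) : ℝ) * r ^ (n + N)) := by
          apply Summable.tsum_le_tsum _ ((summable_nat_add_iff (f := D) N).2 hDsum) (hshift.mul_left _)
          intro n
          rw [hDdef]
          have hd := hN (n + N) (by omega)
          rw [dist_eq_norm] at hd
          calc ((n + N + k).choose k : ℝ) * ‖c (n + N) - s‖ * r ^ (n + N)
              ≤ ((n + N + k).choose k : ℝ) * (ε/4) * r ^ (n + N) := by
                have h1 : (0:ℝ) ≤ ((n + N + k).choose k : ℝ) := by positivity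
                have h2 : (0:ℝ) ≤ r ^ (n + N) := by positivity
                exact mul_le_mul_of_nonneg_right
                  (mul_le_mul_of_nonneg_left (le_of_lt hd) h1) h2
            _ = (ε/4) * ((((n + N + k).choose k : ℕ) : ℝ) * r ^ (n + N)) := by ring
      _ = (ε/4) * ∑' n : ℕ, (((n + N + k).choose k : ℕ) : ℝ) * r ^ (n + N) := by
          rw [tsum_mul_left]
      _ ≤ (ε/4) * (1 / (1 - r)^(k+1)) := by
          gcongr
          have h2 := Summable.sum_add_tsum_nat_add N hchR.summable
          have h3 : 0 ≤ ∑ n ∈ Finset.range N, (((n + k).choose k : ℕ) : ℝ) * r ^ n :=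
            Finset.sum_nonneg fun n _ => by positivity
          rw [hchR.tsum_eq] at h2
          linarith
  -- combine
  have h1r : (0:ℝ) < 1 - r := by linarith
  have hnorm1r : ‖(1 - (r:ℂ))^(k+1)‖ = (1 - r)^(k+1) := by
    rw [norm_pow]
    congr 1
    rw [show (1 : ℂ) - (r:ℂ) = ((1 - r : ℝ) : ℂ) by push_cast; ring,
      Complex.norm_real, Real.norm_eq_abs, abs_of_pos h1r]
  calc ‖(1 - (r:ℂ))^(k+1) * ∑' n, (((n + k).choose k : ℕ) : ℂ) * (c n - s) * (r:ℂ)^n‖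
      = (1 - r)^(k+1) * ‖∑' n, (((n + k).choose k : ℕ) : ℂ) * (c n - s) * (r:ℂ)^n‖ := by
        rw [norm_mul, hnorm1r]
    _ ≤ (1 - r)^(k+1) * (∑' n, D n) :=
        mul_le_mul_of_nonneg_left hnorm_le (by positivity)
    _ = (1 - r)^(k+1) * (∑ n ∈ Finset.range N, D n + ∑' n : ℕ, D (n + N)) := by rw [hsplit]
    _ ≤ (1 - r)^(k+1) * (B + (ε/4) * (1 / (1 - r)^(k+1))) :=
        mul_le_mul_of_nonneg_left (add_le_add hhead htail) (by positivity)
    _ = (1 - r)^(k+1) * B + (ε/4) * ((1 - r)^(k+1) / (1 - r)^(k+1)) := by ring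
    _ = (1 - r)^(k+1) * B + ε/4 := by rw [div_self (by positivity)]; ring
    _ < ε/2 + ε/4 := by linarith
    _ < ε := by linarith
end

section
/- There exists a sequence (u_m)_{m≥1} of real numbers with ∑_{m≥1} |u_m|/m < ∞ such that ∑ u_m converges (to some s) but the Riemann (R,1) means ∑_{m≥1} u_m (sin mt)/(mt) do not tend to s as t → 0⁺. -/
open Filter Finset Real

namespace R1CE

def Nn (n : ℕ) : ℕ := 2 ^ (n ^ 4)
def Jn (n : ℕ) : ℕ := 2 ^ (n ^ 2)
noncomputable def Mn (n j : ℕ) : ℕ := ⌈(((j : ℝ) + 1 / 2) * π * (Nn n : ℝ))⌉₊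

lemma Nn_pos (n : ℕ) : 0 < Nn n := Nat.pow_pos (by norm_num)
lemma Jn_pos (n : ℕ) : 0 < Jn n := Nat.pow_pos (by norm_num)
lemma one_le_Nn_real (n : ℕ) : (1 : ℝ) ≤ (Nn n : ℝ) := by
  exact_mod_cast Nn_pos n
lemma two_le_Nn (n : ℕ) (hn : 1 ≤ n) : 2 ≤ Nn n := by
  have : (2:ℕ)^1 ≤ 2 ^ (n^4) := Nat.pow_le_pow_right (by norm_num) (Nat.one_le_pow _ _ hn)
  simpa [Nn] using this

lemma Mn_ge (n j : ℕ) : ((j : ℝ) + 1 / 2) * π * (Nn n : ℝ) ≤ (Mn n j : ℝ) :=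
  Nat.le_ceil _

lemma Mn_arg_pos (n j : ℕ) : 0 < ((j : ℝ) + 1 / 2) * π * (Nn n : ℝ) := by
  have := pi_pos
  have := one_le_Nn_real n
  positivity

lemma Mn_le (n j : ℕ) : (Mn n j : ℝ) ≤ ((j : ℝ) + 1 / 2) * π * (Nn n : ℝ) + 1 :=
  (Nat.ceil_lt_add_one (Mn_arg_pos n j).le).le

lemma Mn_pos (n j : ℕ) : 0 < Mn n j := by
  rw [Mn, Nat.ceil_pos]; exact Mn_arg_pos n j

lemma Mn_lt_succ (n j : ℕ) : Mn n j < Mn n (j + 1) := by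
  have h1 : (Mn n j : ℝ) < (Mn n (j+1) : ℝ) := by
    have hle := Mn_le n j
    have hge := Mn_ge n (j+1)
    have hpi : (3:ℝ) ≤ π := pi_gt_three.le
    have hN := one_le_Nn_real n
    have : ((j:ℝ) + 1/2) * π * Nn n + 3 ≤ (((j+1 : ℕ):ℝ) + 1/2) * π * Nn n := by
      push_cast
      nlinarith
    linarith
  exact_mod_cast h1

lemma Mn_strictMono (n : ℕ) : StrictMono (Mn n) :=
  strictMono_nat_of_lt_succ (Mn_lt_succ n)

lemma Nn_le_Mn (n j : ℕ) : Nn n ≤ Mn n j := by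
  have h1 : (Nn n : ℝ) ≤ (Mn n j : ℝ) := by
    have hge := Mn_ge n j
    have hpi : (3:ℝ) ≤ π := pi_gt_three.le
    have hN := one_le_Nn_real n
    have hj : (0:ℝ) ≤ (j:ℝ) := Nat.cast_nonneg j
    have key : (1:ℝ) ≤ ((j:ℝ) + 1/2) * π := by nlinarith
    have h2 : (1:ℝ) * (Nn n : ℝ) ≤ (((j:ℝ) + 1/2) * π) * (Nn n : ℝ) :=
      mul_le_mul_of_nonneg_right key (by positivity)
    nlinarith
  exact_mod_cast h1

lemma Mn_le_bound (n j : ℕ) (hj : j ≤ Jn n) : Mn n j ≤ 8 * Jn n * Nn n := by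
  have h1 : (Mn n j : ℝ) ≤ ((8 * Jn n * Nn n : ℕ) : ℝ) := by
    have hle := Mn_le n j
    have hpi : π ≤ 4 := pi_le_four
    have hpi3 : (3:ℝ) ≤ π := pi_gt_three.le
    have hN := one_le_Nn_real n
    have hJ : (1:ℝ) ≤ (Jn n : ℝ) := by exact_mod_cast Jn_pos n
    have hjJ : (j : ℝ) ≤ (Jn n : ℝ) := by exact_mod_cast hj
    have h2 : ((j:ℝ)+1/2)*π ≤ 4*(Jn n:ℝ) + 2 := by nlinarith
    have h3 : ((j:ℝ)+1/2)*π*(Nn n:ℝ) ≤ (4*(Jn n:ℝ)+2)*(Nn n:ℝ) :=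
      mul_le_mul_of_nonneg_right h2 (by positivity)
    have h4 : (2:ℝ) * (Nn n:ℝ) ≤ (4*(Jn n:ℝ) - 2) * (Nn n:ℝ) :=
      mul_le_mul_of_nonneg_right (by linarith) (by positivity)
    push_cast
    nlinarith
  exact_mod_cast h1

lemma pow_bound (n : ℕ) : 8 * Jn n * Nn n = 2 ^ (n^2 + n^4 + 3) := by
  rw [Jn, Nn]
  ring

lemma block_lt (n : ℕ) (hn : 1 ≤ n) : Mn n (Jn n) < Mn (n+1) 1 := by
  calc Mn n (Jn n) ≤ 2 ^ (n^2 + n^4 + 3) := by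
        rw [← pow_bound]; exact Mn_le_bound n (Jn n) le_rfl
    _ < 2 ^ ((n+1)^4) := by
        apply Nat.pow_lt_pow_right (by norm_num)
        nlinarith
    _ = Nn (n+1) := rfl
    _ ≤ Mn (n+1) 1 := Nn_le_Mn (n+1) 1

lemma Mn_block_mono {k n : ℕ} (hk : 1 ≤ k) (hkn : k < n) : Mn k (Jn k) < Mn n 1 := by
  induction n with
  | zero => omega
  | succ m ih =>
    rcases Nat.lt_succ_iff_lt_or_eq.mp hkn with h | h
    · calc Mn k (Jn k) < Mn m 1 := ih h
        _ ≤ Mn m (Jn m) := (Mn_strictMono m).monotone (Jn_pos m)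
        _ < Mn (m+1) 1 := block_lt m (by omega)
    · subst h; exact block_lt k hk

/-- Global injectivity of `Mn` on the domain. -/
lemma Mn_inj {n j n' j' : ℕ} (hn : 1 ≤ n) (hj : 1 ≤ j) (hjJ : j ≤ Jn n)
    (hn' : 1 ≤ n') (hj' : 1 ≤ j') (hjJ' : j' ≤ Jn n')
    (h : Mn n j = Mn n' j') : n = n' ∧ j = j' := by
  rcases lt_trichotomy n n' with hlt | heq | hgt
  · exfalso
    have : Mn n j < Mn n' j' :=
      lt_of_le_of_lt ((Mn_strictMono n).monotone hjJ)
        (lt_of_lt_of_le (Mn_block_mono hn hlt) ((Mn_strictMono n').monotone hj'))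
    omega
  · refine ⟨heq, ?_⟩
    subst heq
    exact (Mn_strictMono n).injective h
  · exfalso
    have : Mn n' j' < Mn n j :=
      lt_of_le_of_lt ((Mn_strictMono n').monotone hjJ')
        (lt_of_lt_of_le (Mn_block_mono hn' hgt) ((Mn_strictMono n).monotone hj))
    omega

/-! ### The tail function and the series -/

noncomputable def Tt (m : ℕ) : ℝ :=
  ∑ n ∈ Icc 1 m, ∑ j ∈ Ico 1 (Jn n),
    if Mn n j ≤ m ∧ m < Mn n (j + 1) then (-1) ^ (j + 1) / n else 0

noncomputable def uu (m : ℕ) : ℝ := Tt (m - 1) - Tt m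

noncomputable def rho (n j : ℕ) : ℝ :=
  if 1 ≤ j ∧ j < Jn n then (-1) ^ (j + 1) / n else 0

lemma rho_zero (n : ℕ) : rho n 0 = 0 := by simp [rho]
lemma rho_top (n : ℕ) : rho n (Jn n) = 0 := by simp [rho]
lemma rho_abs_le (n j : ℕ) : |rho n j| ≤ 1 / n := by
  rw [rho]
  split_ifs
  · rw [abs_div, abs_pow]
    simp
  · simpa using (by positivity : (0:ℝ) ≤ 1/(n:ℝ))

lemma n_le_Mn (n j : ℕ) (hn : 1 ≤ n) : n < Mn n j := by
  have h1 : n < 2 ^ (n ^ 4) := by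
    calc n < 2 ^ n := Nat.lt_two_pow_self
      _ ≤ 2 ^ (n ^ 4) := Nat.pow_le_pow_right (by norm_num) (Nat.le_self_pow (by norm_num) n)
  exact lt_of_lt_of_le h1 (Nn_le_Mn n j)

/-- the indicator in `Tt` can hold for at most one pair `(n,j)`. -/
lemma indicator_unique {n j n' j' m : ℕ} (hn : 1 ≤ n) (hj : 1 ≤ j) (hjJ : j < Jn n)
    (hn' : 1 ≤ n') (hj' : 1 ≤ j') (hjJ' : j' < Jn n')
    (h1 : Mn n j ≤ m) (h2 : m < Mn n (j + 1))
    (h1' : Mn n' j' ≤ m) (h2' : m < Mn n' (j' + 1)) : n = n' ∧ j = j' := by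
  rcases lt_trichotomy n n' with hlt | heq | hgt
  · exfalso
    have : Mn n (j+1) ≤ Mn n (Jn n) := (Mn_strictMono n).monotone (by omega)
    have h3 : Mn n (Jn n) < Mn n' 1 := Mn_block_mono hn hlt
    have h4 : Mn n' 1 ≤ Mn n' j' := (Mn_strictMono n').monotone hj'
    omega
  · subst heq
    refine ⟨rfl, ?_⟩
    by_contra hne
    rcases lt_or_gt_of_ne hne with hlt | hgt
    · have : Mn n (j+1) ≤ Mn n j' := (Mn_strictMono n).monotone (by omega)
      omega
    · have : Mn n (j'+1) ≤ Mn n j := (Mn_strictMono n).monotone (by omega)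
      omega
  · exfalso
    have : Mn n' (j'+1) ≤ Mn n' (Jn n') := (Mn_strictMono n').monotone (by omega)
    have h3 : Mn n' (Jn n') < Mn n 1 := Mn_block_mono hn' hgt
    have h4 : Mn n 1 ≤ Mn n j := (Mn_strictMono n).monotone hj
    omega

lemma Tt_eval {n j m : ℕ} (hn : 1 ≤ n) (hj : 1 ≤ j) (hjJ : j < Jn n)
    (h1 : Mn n j ≤ m) (h2 : m < Mn n (j + 1)) :
    Tt m = (-1) ^ (j + 1) / n := by
  have hnm : n ∈ Icc 1 m := by
    simp only [mem_Icc]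
    exact ⟨hn, le_trans (n_le_Mn n j hn).le h1⟩
  rw [Tt]
  rw [Finset.sum_eq_single_of_mem n hnm]
  · rw [Finset.sum_eq_single_of_mem j (by simp only [mem_Ico]; exact ⟨hj, hjJ⟩)]
    · rw [if_pos ⟨h1, h2⟩]
    · intro j' hj' hne
      rw [if_neg]
      rintro ⟨c1, c2⟩
      simp only [mem_Ico] at hj'
      exact hne (indicator_unique hn hj'.1 hj'.2 hn hj hjJ c1 c2 h1 h2).2
  · intro n' hn' hne
    apply Finset.sum_eq_zero
    intro j' hj'
    rw [if_neg]
    rintro ⟨c1, c2⟩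
    simp only [mem_Ico] at hj'
    simp only [mem_Icc] at hn'
    exact hne (indicator_unique hn'.1 hj'.1 hj'.2 hn hj hjJ c1 c2 h1 h2).1

lemma Tt_eq_zero {m : ℕ}
    (h : ∀ n j, 1 ≤ n → 1 ≤ j → j < Jn n → ¬(Mn n j ≤ m ∧ m < Mn n (j + 1))) :
    Tt m = 0 := by
  rw [Tt]
  apply Finset.sum_eq_zero
  intro n hn
  apply Finset.sum_eq_zero
  intro j hj
  simp only [mem_Icc] at hn
  simp only [mem_Ico] at hj
  rw [if_neg (h n j hn.1 hj.1 hj.2)]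

lemma Tt_abs_le {m : ℕ} {K : ℕ} (hK : 1 ≤ K) (hm : Mn K (Jn K) ≤ m) :
    |Tt m| ≤ 1 / K := by
  by_cases hz : Tt m = 0
  · rw [hz]
    simpa using (by positivity : (0:ℝ) ≤ 1/(K:ℝ))
  · -- some indicator holds
    have hex : ∃ n j, 1 ≤ n ∧ 1 ≤ j ∧ j < Jn n ∧ Mn n j ≤ m ∧ m < Mn n (j + 1) := by
      by_contra hc
      push_neg at hc
      apply hz
      apply Tt_eq_zero
      intro n j h1 h2 h3
      rintro ⟨c1, c2⟩
      have := hc n j h1 h2 h3 c1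
      omega
    obtain ⟨n, j, hn, hj, hjJ, h1, h2⟩ := hex
    rw [Tt_eval hn hj hjJ h1 h2]
    have hKn : K < n := by
      by_contra hc
      push_neg at hc
      rcases eq_or_lt_of_le hc with heq | hlt
      · subst heq
        have : Mn n (j+1) ≤ Mn n (Jn n) := (Mn_strictMono n).monotone (by omega)
        omega
      · have hA : Mn n (j+1) ≤ Mn n (Jn n) := (Mn_strictMono n).monotone (by omega)
        have hB : Mn n (Jn n) < Mn K 1 := Mn_block_mono hn hlt
        have hC : Mn K 1 ≤ Mn K (Jn K) := (Mn_strictMono K).monotone (Jn_pos K)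
        omega
    rw [abs_div, abs_pow]
    simp only [abs_neg, abs_one, one_pow, Nat.abs_cast]
    apply div_le_div_of_nonneg_left (by norm_num) (by exact_mod_cast hK) ?_
    exact_mod_cast hKn.le

/-! ### Values and support of `uu` -/

lemma Tt_at_jump {n j : ℕ} (hn : 1 ≤ n) (hj : 1 ≤ j) (hjJ : j ≤ Jn n) :
    Tt (Mn n j) = rho n j := by
  rcases lt_or_eq_of_le hjJ with hlt | heq
  · rw [Tt_eval hn hj hlt le_rfl (Mn_lt_succ n j), rho, if_pos ⟨hj, hlt⟩]
  · subst heq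
    rw [rho_top]
    apply Tt_eq_zero
    intro n' j' hn' hj' hjJ'
    rintro ⟨c1, c2⟩
    rcases lt_trichotomy n' n with hlt | hE | hgt
    · have h3 : Mn n' (j'+1) ≤ Mn n' (Jn n') := (Mn_strictMono n').monotone (by omega)
      have h4 : Mn n' (Jn n') < Mn n 1 := Mn_block_mono hn' hlt
      have h5 : Mn n 1 ≤ Mn n (Jn n) := (Mn_strictMono n).monotone (Jn_pos n)
      omega
    · subst hE
      have h3 : Mn n' j' ≤ Mn n' (Jn n') := (Mn_strictMono n').monotone hjJ'.le
      have h4 : Mn n' (Jn n') < Mn n' (j' + 1) := by omega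
      have := (Mn_strictMono n').lt_iff_lt.mp h4
      omega
    · have h3 : Mn n 1 ≤ Mn n (Jn n) := (Mn_strictMono n).monotone (Jn_pos n)
      have h4 : Mn n (Jn n) < Mn n' 1 := Mn_block_mono hn hgt
      have h5 : Mn n' 1 ≤ Mn n' j' := (Mn_strictMono n').monotone hj'
      omega

lemma Tt_before_jump {n j : ℕ} (hn : 1 ≤ n) (hj : 1 ≤ j) (hjJ : j ≤ Jn n) :
    Tt (Mn n j - 1) = rho n (j - 1) := by
  rcases lt_or_eq_of_le hj with hlt | heq
  · -- 2 ≤ j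
    have h2j : 2 ≤ j := hlt
    have hmono : Mn n (j-1) < Mn n j := (Mn_strictMono n) (by omega)
    have hstep : (j - 1) + 1 = j := by omega
    have heval := Tt_eval (m := Mn n j - 1) hn (j := j - 1) (by omega) (by omega)
      (by omega) (by rw [hstep]; have := Mn_pos n j; omega)
    rw [heval, rho, if_pos ⟨by omega, by omega⟩]
  · -- j = 1
    rw [← heq]
    have h0 : (1:ℕ) - 1 = 0 := rfl
    rw [h0, rho_zero]
    apply Tt_eq_zero
    intro n' j' hn' hj' hjJ'
    rintro ⟨c1, c2⟩
    have hm1 : Mn n 1 - 1 + 1 = Mn n 1 := by have := Mn_pos n 1; omega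
    rcases lt_trichotomy n' n with hlt | hE | hgt
    · have h3 : Mn n' (j'+1) ≤ Mn n' (Jn n') := (Mn_strictMono n').monotone (by omega)
      have h4 : Mn n' (Jn n') < Mn n 1 := Mn_block_mono hn' hlt
      omega
    · subst hE
      have h5 : Mn n' 1 ≤ Mn n' j' := (Mn_strictMono n').monotone hj'
      omega
    · have h3 : Mn n 1 ≤ Mn n (Jn n) := (Mn_strictMono n).monotone (Jn_pos n)
      have h4 : Mn n (Jn n) < Mn n' 1 := Mn_block_mono hn hgt
      have h5 : Mn n' 1 ≤ Mn n' j' := (Mn_strictMono n').monotone hj'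
      omega

lemma uu_eval {n j : ℕ} (hn : 1 ≤ n) (hj : 1 ≤ j) (hjJ : j ≤ Jn n) :
    uu (Mn n j) = rho n (j - 1) - rho n j := by
  rw [uu, Tt_at_jump hn hj hjJ, Tt_before_jump hn hj hjJ]

lemma uu_abs_le {n j : ℕ} (hn : 1 ≤ n) (hj : 1 ≤ j) (hjJ : j ≤ Jn n) :
    |uu (Mn n j)| ≤ 2 / n := by
  rw [uu_eval hn hj hjJ]
  calc |rho n (j-1) - rho n j| ≤ |rho n (j-1)| + |rho n j| := abs_sub _ _
    _ ≤ 1/n + 1/n := add_le_add (rho_abs_le n _) (rho_abs_le n _)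
    _ = 2/n := by ring

lemma uu_middle {n j : ℕ} (hn : 1 ≤ n) (hj : 2 ≤ j) (hjJ : j + 1 ≤ Jn n) :
    uu (Mn n j) = (-1) ^ j * (2 / n) := by
  rw [uu_eval hn (by omega) (by omega), rho, rho, if_pos ⟨by omega, by omega⟩,
    if_pos ⟨by omega, by omega⟩]
  have hstep : (j - 1) + 1 = j := by omega
  rw [hstep]
  have : (-1 : ℝ) ^ (j + 1) = -(-1)^j := by ring
  rw [this]
  field_simp
  ring

lemma uu_eq_zero {m : ℕ} (h : ∀ n j, 1 ≤ n → 1 ≤ j → j ≤ Jn n → m ≠ Mn n j) :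
    uu m = 0 := by
  rcases Nat.eq_zero_or_pos m with hm | hm
  · subst hm; simp [uu]
  rw [uu, sub_eq_zero]
  by_cases hex : ∃ n j, 1 ≤ n ∧ 1 ≤ j ∧ j < Jn n ∧ Mn n j ≤ m ∧ m < Mn n (j + 1)
  · obtain ⟨n, j, hn, hj, hjJ, h1, h2⟩ := hex
    have hne1 : m ≠ Mn n j := h n j hn hj hjJ.le
    have hne2 : m ≠ Mn n (j+1) := h n (j+1) hn (by omega) (by omega)
    rw [Tt_eval hn hj hjJ (by omega) (by omega), Tt_eval hn hj hjJ h1 h2]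
  · push_neg at hex
    rw [Tt_eq_zero, Tt_eq_zero]
    · intro n j hn hj hjJ
      rintro ⟨c1, c2⟩
      have := hex n j hn hj hjJ c1
      omega
    · intro n j hn hj hjJ
      rintro ⟨c1, c2⟩
      -- indicator holds at m - 1; derive indicator at m for contradiction
      have hne2 : m ≠ Mn n (j+1) := h n (j+1) hn (by omega) (by omega)
      have hc1 : Mn n j ≤ m := by omega
      have hc2 : m < Mn n (j+1) := by omega
      have := hex n j hn hj hjJ hc1
      omega

lemma sum_uu_block {k : ℕ} (hk : 1 ≤ k) :
    ∑ j ∈ Icc 1 (Jn k), uu (Mn k j) = 0 := by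
  have h1 : ∑ j ∈ Icc 1 (Jn k), uu (Mn k j)
      = ∑ j ∈ Icc 1 (Jn k), (rho k (j-1) - rho k j) := by
    apply Finset.sum_congr rfl
    intro j hj
    simp only [mem_Icc] at hj
    exact uu_eval hk hj.1 hj.2
  rw [h1]
  have h2 : ∑ j ∈ Icc 1 (Jn k), (rho k (j-1) - rho k j)
      = ∑ i ∈ range (Jn k), (rho k i - rho k (i+1)) := by
    apply Finset.sum_nbij' (fun j => j - 1) (fun i => i + 1)
    · intro j hj; simp only [mem_Icc] at hj; simp only [mem_range]; omega
    · intro i hi; simp only [mem_range] at hi; simp only [mem_Icc]; omega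
    · intro j hj; simp only [mem_Icc] at hj; omega
    · intro i hi; omega
    · intro j hj
      simp only [mem_Icc] at hj
      have : j - 1 + 1 = j := by omega
      rw [this]
  rw [h2, Finset.sum_range_sub', rho_zero, rho_top, sub_zero]

/-! ### Partial sums -/

lemma Tt_zero : Tt 0 = 0 := by simp [Tt]

lemma sum_Icc_uu (n : ℕ) : ∑ m ∈ Icc 1 n, uu m = - Tt n := by
  induction n with
  | zero => simp [Tt_zero]
  | succ p ih =>
    rw [Finset.sum_Icc_succ_top (by omega : 1 ≤ p + 1), ih, uu]
    simp only [Nat.add_sub_cancel]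
    ring

lemma tendsto_partial_sums :
    Tendsto (fun n : ℕ => ∑ m ∈ Icc 1 n, uu m) atTop (nhds 0) := by
  rw [show (fun n : ℕ => ∑ m ∈ Icc 1 n, uu m) = fun n => - Tt n from funext sum_Icc_uu]
  rw [← neg_zero]
  apply Tendsto.neg
  rw [NormedAddCommGroup.tendsto_nhds_zero]
  intro ε hε
  obtain ⟨K0, hK0⟩ := exists_nat_one_div_lt hε
  filter_upwards [eventually_ge_atTop (Mn (K0+1) (Jn (K0+1)))] with m hm
  have h1 : |Tt m| ≤ 1 / (K0+1 : ℕ) := Tt_abs_le (by omega) hm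
  have : ((K0:ℝ) + 1) = ((K0 + 1 : ℕ) : ℝ) := by push_cast; ring
  rw [Real.norm_eq_abs]
  calc |Tt m| ≤ 1 / ((K0+1 : ℕ):ℝ) := h1
    _ < ε := by rw [← this]; exact hK0

/-! ### The transfer to the double-indexed sum -/

noncomputable def Gf (χ : ℕ → ℝ) (p : ℕ × ℕ) : ℝ :=
  if 1 ≤ p.1 ∧ 1 ≤ p.2 ∧ p.2 ≤ Jn p.1 then χ (Mn p.1 p.2) else 0

lemma hasSum_transfer {χ : ℕ → ℝ}
    (hχ : ∀ m, 1 ≤ m → (∀ n j, 1 ≤ n → 1 ≤ j → j ≤ Jn n → m ≠ Mn n j) → χ m = 0)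
    (a : ℝ) : HasSum (fun m : ℕ => χ (m + 1)) a ↔ HasSum (Gf χ) a := by
  apply hasSum_iff_hasSum_of_ne_zero_bij
    (i := fun p : Function.support (Gf χ) => Mn (p.1).1 (p.1).2 - 1)
  · rintro ⟨⟨n, j⟩, hp⟩ ⟨⟨n', j'⟩, hp'⟩ h
    simp only [Function.mem_support, Gf] at hp hp'
    have hd : 1 ≤ n ∧ 1 ≤ j ∧ j ≤ Jn n := by
      by_contra hc; exact hp (if_neg hc)
    have hd' : 1 ≤ n' ∧ 1 ≤ j' ∧ j' ≤ Jn n' := by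
      by_contra hc; exact hp' (if_neg hc)
    simp only at h
    have hMeq : Mn n j = Mn n' j' := by
      have := Mn_pos n j
      have := Mn_pos n' j'
      omega
    obtain ⟨h1, h2⟩ := Mn_inj hd.1 hd.2.1 hd.2.2 hd'.1 hd'.2.1 hd'.2.2 hMeq
    exact Subtype.ext (Prod.ext h1 h2)
  · intro m hm
    simp only [Function.mem_support] at hm
    have h1 : χ (m+1) ≠ 0 := hm
    have hex : ∃ n j, 1 ≤ n ∧ 1 ≤ j ∧ j ≤ Jn n ∧ m + 1 = Mn n j := by
      by_contra hc
      push_neg at hc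
      exact h1 (hχ (m+1) (by omega) (fun n j a b c => hc n j a b c))
    obtain ⟨n, j, hn, hj, hjJ, hM⟩ := hex
    have hGne : Gf χ (n, j) ≠ 0 := by
      rw [Gf, if_pos ⟨hn, hj, hjJ⟩, ← hM]
      exact h1
    refine ⟨⟨(n, j), hGne⟩, ?_⟩
    simp only
    omega
  · rintro ⟨⟨n, j⟩, hp⟩
    simp only [Function.mem_support, Gf] at hp ⊢
    have hd : 1 ≤ n ∧ 1 ≤ j ∧ j ≤ Jn n := by
      by_contra hc; exact hp (if_neg hc)
    rw [if_pos hd]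
    have : Mn n j - 1 + 1 = Mn n j := by have := Mn_pos n j; omega
    rw [this]

/-! ### Summability of `∑ |u m| / m` -/

lemma summable_Gf_abs : Summable (Gf (fun m => |uu m| / m)) := by
  have hnn : ∀ p : ℕ × ℕ, 0 ≤ Gf (fun m => |uu m| / m) p := by
    intro p
    rw [Gf]
    split_ifs
    · positivity
    · exact le_refl 0
  rw [summable_prod_of_nonneg hnn]
  constructor
  · -- each fiber summable: finite support
    intro n
    apply summable_of_ne_finset_zero (s := Icc 1 (Jn n))
    intro j hj
    simp only [mem_Icc] at hj
    rw [Gf, if_neg]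
    rintro ⟨h1, h2, h3⟩
    exact hj ⟨h2, h3⟩
  · -- the row sums are bounded by a geometric series
    refine Summable.of_nonneg_of_le ?_ ?_ ((summable_geometric_two).mul_left 8)
    · intro n
      apply tsum_nonneg
      intro j
      exact hnn (n, j)
    · intro n
      have hfin : ∑' j : ℕ, Gf (fun m => |uu m| / m) (n, j)
          = ∑ j ∈ Icc 1 (Jn n), Gf (fun m => |uu m| / m) (n, j) := by
        apply tsum_eq_sum
        intro j hj
        simp only [mem_Icc] at hj
        rw [Gf, if_neg]
        rintro ⟨h1, h2, h3⟩
        exact hj ⟨h2, h3⟩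
      rw [hfin]
      rcases Nat.eq_zero_or_pos n with hn | hn
      · subst hn
        have : ∀ j ∈ Icc 1 (Jn 0), Gf (fun m => |uu m| / m) (0, j) = 0 := by
          intro j hj
          rw [Gf, if_neg (by rintro ⟨h1, _⟩; omega)]
        rw [Finset.sum_eq_zero this]
        norm_num
      · -- n ≥ 1
        have hterm : ∀ j ∈ Icc 1 (Jn n), Gf (fun m => |uu m| / m) (n, j)
            ≤ (2/n) / (Nn n : ℝ) := by
          intro j hj
          simp only [mem_Icc] at hj
          rw [Gf, if_pos ⟨hn, hj.1, hj.2⟩]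
          have h1 : |uu (Mn n j)| ≤ 2 / n := uu_abs_le hn hj.1 hj.2
          have h2 : (Nn n : ℝ) ≤ (Mn n j : ℝ) := by exact_mod_cast Nn_le_Mn n j
          have h3 : (0:ℝ) < (Nn n : ℝ) := by exact_mod_cast Nn_pos n
          exact div_le_div₀ (by positivity) h1 h3 h2
        calc ∑ j ∈ Icc 1 (Jn n), Gf (fun m => |uu m| / m) (n, j)
            ≤ ∑ j ∈ Icc 1 (Jn n), (2/n) / (Nn n : ℝ) := Finset.sum_le_sum hterm
          _ = (Jn n : ℝ) * ((2/n) / (Nn n : ℝ)) := by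
              rw [Finset.sum_const, Nat.card_Icc]
              simp [nsmul_eq_mul]
          _ ≤ 8 * ((1:ℝ)/2)^n := by
              have hn1 : (1:ℝ) ≤ (n:ℝ) := by exact_mod_cast hn
              have hNpos : (0:ℝ) < (Nn n : ℝ) := by exact_mod_cast Nn_pos n
              have key : (Jn n : ℝ) * 2 * 2^n ≤ 8 * (Nn n : ℝ) := by
                have : (Jn n : ℕ) * 2 * 2^n ≤ 8 * Nn n := by
                  rw [Jn, Nn]
                  have hexp : n^2 + 1 + n ≤ n^4 + 3 := by
                    zify
                    have hn1' : (1:ℤ) ≤ (n:ℤ) := by exact_mod_cast hn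
                    nlinarith [sq_nonneg ((n:ℤ)^2 - 1), sq_nonneg ((n:ℤ) - 1)]
                  calc 2^(n^2) * 2 * 2^n = 2^(n^2 + 1 + n) := by ring
                    _ ≤ 2^(n^4 + 3) := Nat.pow_le_pow_right (by norm_num) hexp
                    _ = 8 * 2^(n^4) := by ring
                exact_mod_cast this
              have hnpos : (0:ℝ) < (n:ℝ) := by exact_mod_cast hn
              have h2npos : (0:ℝ) < (2:ℝ)^n := by positivity
              have hL : (Jn n:ℝ) * ((2/(n:ℝ))/(Nn n : ℝ)) = ((Jn n:ℝ) * 2) / ((n:ℝ) * (Nn n:ℝ)) := by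
                field_simp
              have hR : 8 * ((1:ℝ)/2)^n = 8 / 2^n := by
                rw [div_pow, one_pow]
                ring
              rw [hL, hR, div_le_div_iff₀ (by positivity) h2npos]
              calc (Jn n:ℝ) * 2 * 2^n ≤ 8 * (Nn n:ℝ) := key
                _ ≤ 8 * ((n:ℝ) * (Nn n:ℝ)) := by nlinarith

lemma summable_hyp1 : Summable (fun m : ℕ => |uu (m + 1)| / ((m:ℝ) + 1)) := by
  have hχ : ∀ m, 1 ≤ m → (∀ n j, 1 ≤ n → 1 ≤ j → j ≤ Jn n → m ≠ Mn n j) →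
      |uu m| / (m:ℝ) = 0 := by
    intro m hm h
    rw [uu_eq_zero h]
    simp
  have h1 : HasSum (fun m : ℕ => |uu (m+1)| / ((m+1 : ℕ):ℝ)) (∑' p, Gf (fun m => |uu m| / m) p) :=
    (hasSum_transfer hχ _).mpr summable_Gf_abs.hasSum
  have h2 : Summable (fun m : ℕ => |uu (m+1)| / ((m+1 : ℕ):ℝ)) := h1.summable
  have : (fun m : ℕ => |uu (m+1)| / ((m+1 : ℕ):ℝ)) = fun m : ℕ => |uu (m+1)| / ((m:ℝ)+1) := by
    funext m
    push_cast
    ring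
  rwa [this] at h2

/-! ### Elementary bounds on `sin x / x` -/

lemma sinc_abs_le_one {x : ℝ} (hx : 0 < x) : |Real.sin x / x| ≤ 1 := by
  rw [abs_div, abs_of_pos hx, div_le_one hx]
  calc |Real.sin x| ≤ |x| := Real.abs_sin_le_abs
    _ = x := abs_of_pos hx

lemma sinc_abs_le_inv {x : ℝ} (hx : 0 < x) : |Real.sin x / x| ≤ 1 / x := by
  rw [abs_div, abs_of_pos hx]
  exact div_le_div₀ (by norm_num) (Real.abs_sin_le_one x) hx le_rfl

lemma sinc_near_one {x : ℝ} (hx : 0 < x) (hx1 : x ≤ 1) : |Real.sin x / x - 1| ≤ x := by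
  have h1 : Real.sin x < x := Real.sin_lt hx
  have h2 : x - x^3/4 < Real.sin x := by have := Real.sin_gt_sub_cube hx; nlinarith [pow_pos hx 3]
  have h3 : Real.sin x / x - 1 = (Real.sin x - x)/x := by field_simp
  rw [h3, abs_div, abs_of_pos hx, div_le_iff₀ hx]
  have h4 : |Real.sin x - x| ≤ x^3/4 := by
    rw [abs_le]
    constructor <;> nlinarith
  nlinarith [sq_nonneg x]

lemma cos_nat_pi (j : ℕ) : Real.cos (j * π) = (-1)^j := by
  induction j with
  | zero => simp
  | succ p ih =>
    have : ((p+1 : ℕ):ℝ) * π = (p:ℝ) * π + π := by push_cast; ring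
    rw [this, Real.cos_add_pi, ih]
    ring

lemma sin_shift (j : ℕ) (e : ℝ) :
    Real.sin (((j:ℝ) + 1/2) * π + e) = (-1)^j * Real.cos e := by
  have h1 : ((j:ℝ) + 1/2) * π + e = (j:ℝ) * π + (π/2 + e) := by ring
  rw [h1, Real.sin_add, Real.sin_nat_mul_pi, cos_nat_pi, Real.sin_add, Real.sin_pi_div_two,
    Real.cos_pi_div_two]
  ring

/-! ### Block sums -/

noncomputable def chi (t : ℝ) (m : ℕ) : ℝ := uu m * Real.sin (m * t) / (m * t)

noncomputable def Bk (t : ℝ) (k : ℕ) : ℝ := ∑ j ∈ Icc 1 (Jn k), Gf (chi t) (k, j)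

noncomputable def tn (n : ℕ) : ℝ := ((Nn n : ℝ))⁻¹

lemma tn_pos (n : ℕ) : 0 < tn n := by
  rw [tn]
  have : (0:ℝ) < (Nn n : ℝ) := by exact_mod_cast Nn_pos n
  positivity

lemma tn_le_half {n : ℕ} (hn : 1 ≤ n) : tn n ≤ 1/2 := by
  rw [tn]
  rw [inv_le_comm₀ (by exact_mod_cast Nn_pos n) (by norm_num)]
  have : (2:ℝ) ≤ (Nn n : ℝ) := by exact_mod_cast two_le_Nn n hn
  linarith [this]

lemma x_pos (k j n : ℕ) : 0 < (Mn k j : ℝ) * tn n := by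
  have h1 : (0:ℝ) < (Mn k j : ℝ) := by exact_mod_cast Mn_pos k j
  exact mul_pos h1 (tn_pos n)

lemma Bk_term_eq {t : ℝ} {k j : ℕ} (hk : 1 ≤ k) (hj : 1 ≤ j) (hjJ : j ≤ Jn k) :
    Gf (chi t) (k, j) = uu (Mn k j) * (Real.sin ((Mn k j : ℝ) * t) / ((Mn k j : ℝ) * t)) := by
  rw [Gf, if_pos ⟨hk, hj, hjJ⟩, chi, mul_div_assoc]

lemma Bk_zero (t : ℝ) : Bk t 0 = 0 := by
  rw [Bk]
  apply Finset.sum_eq_zero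
  intro j hj
  rw [Gf, if_neg]
  rintro ⟨h1, _⟩
  omega

lemma nf1 {k n : ℕ} (hk : 1 ≤ k) (hkn : k < n) : 2*k^2 + k^4 + 4 + k ≤ n^4 := by
  have h1 : (k+1)^4 ≤ n^4 := Nat.pow_le_pow_left (by omega) 4
  have h2 : 2*k^2 + k^4 + 4 + k ≤ (k+1)^4 := by
    zify
    have hk1 : (1:ℤ) ≤ (k:ℤ) := by exact_mod_cast hk
    nlinarith [sq_nonneg ((k:ℤ)), sq_nonneg ((k:ℤ)-1)]
  omega

lemma nf2 {k n : ℕ} (hn : 1 ≤ n) (hkn : n < k) : k^2 + 1 + k + n^4 ≤ k^4 := by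
  obtain ⟨a, rfl⟩ : ∃ a, k = a + 1 := ⟨k - 1, by omega⟩
  have ha1 : 1 ≤ a := by omega
  have h2 : n^4 ≤ a^4 := Nat.pow_le_pow_left (by omega) 4
  have h3 : (a+1)^2 + 1 + (a+1) + a^4 ≤ (a+1)^4 := by
    zify
    have : (1:ℤ) ≤ (a:ℤ) := by exact_mod_cast ha1
    nlinarith [sq_nonneg ((a:ℤ)), sq_nonneg ((a:ℤ)-1)]
  omega

lemma xmax_bound {k j n : ℕ} (hjJ : j ≤ Jn k) :
    (Mn k j : ℝ) * tn n ≤ 2^(k^2 + k^4 + 3) / 2^(n^4) := by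
  have h1 : (Mn k j : ℝ) ≤ ((8 * Jn k * Nn k : ℕ) : ℝ) := by
    exact_mod_cast Mn_le_bound k j hjJ
  have h2 : ((8 * Jn k * Nn k : ℕ) : ℝ) = 2^(k^2 + k^4 + 3) := by
    rw [pow_bound k]
    push_cast
    ring
  have h3 : tn n = 1 / 2^(n^4) := by
    rw [tn, Nn]
    push_cast
    rw [one_div]
  rw [h3]
  rw [div_eq_mul_one_div ((2:ℝ)^(k^2+k^4+3)) ((2:ℝ)^(n^4))]
  apply mul_le_mul_of_nonneg_right (h2 ▸ h1) (by positivity)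

lemma pow2_le_pow2 {a b : ℕ} (h : a ≤ b) : (2:ℝ)^a ≤ 2^b :=
  pow_le_pow_right₀ (by norm_num) h

lemma card_mul_bound {k : ℕ} (hk : 1 ≤ k) {c : ℝ} (hc : 0 ≤ c)
    (f : ℕ → ℝ) (hf : ∀ j ∈ Icc 1 (Jn k), |f j| ≤ (2/k) * c) :
    |∑ j ∈ Icc 1 (Jn k), f j| ≤ 2^(k^2) * (2 * c) := by
  have hkR : (1:ℝ) ≤ (k:ℝ) := by exact_mod_cast hk
  calc |∑ j ∈ Icc 1 (Jn k), f j| ≤ ∑ j ∈ Icc 1 (Jn k), |f j| :=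
        Finset.abs_sum_le_sum_abs _ _
    _ ≤ ∑ _j ∈ Icc 1 (Jn k), (2/k) * c := Finset.sum_le_sum hf
    _ = (Jn k : ℝ) * ((2/k) * c) := by
        rw [Finset.sum_const, Nat.card_Icc]
        simp [nsmul_eq_mul]
    _ ≤ (2:ℝ)^(k^2) * (2 * c) := by
        have hJ : (Jn k : ℝ) = 2^(k^2) := by rw [Jn]; push_cast; ring
        rw [hJ]
        apply mul_le_mul_of_nonneg_left ?_ (by positivity)
        apply mul_le_mul_of_nonneg_right ?_ hc
        rw [div_le_iff₀ (by linarith)]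
        nlinarith

/-- blocks below the resonant block -/
lemma Bk_small_low {k n : ℕ} (hk : 1 ≤ k) (hkn : k < n) : |Bk (tn n) k| ≤ (1/2)^k := by
  have hnf1 := nf1 hk hkn
  have hxmax1 : (2:ℝ)^(k^2 + k^4 + 3) / 2^(n^4) ≤ 1 := by
    rw [div_le_one (by positivity)]
    exact pow2_le_pow2 (by nlinarith)
  have hBk : Bk (tn n) k = ∑ j ∈ Icc 1 (Jn k),
      uu (Mn k j) * (Real.sin ((Mn k j:ℝ) * tn n) / ((Mn k j:ℝ) * tn n) - 1) := by
    have h1 : Bk (tn n) k = ∑ j ∈ Icc 1 (Jn k),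
        uu (Mn k j) * (Real.sin ((Mn k j:ℝ) * tn n) / ((Mn k j:ℝ) * tn n)) :=
      Finset.sum_congr rfl (fun j hj => by
        simp only [mem_Icc] at hj
        exact Bk_term_eq hk hj.1 hj.2)
    have h2 : ∑ j ∈ Icc 1 (Jn k),
        uu (Mn k j) * (Real.sin ((Mn k j:ℝ) * tn n) / ((Mn k j:ℝ) * tn n) - 1)
        = (∑ j ∈ Icc 1 (Jn k),
            uu (Mn k j) * (Real.sin ((Mn k j:ℝ) * tn n) / ((Mn k j:ℝ) * tn n)))
          - ∑ j ∈ Icc 1 (Jn k), uu (Mn k j) := by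
      rw [← Finset.sum_sub_distrib]
      exact Finset.sum_congr rfl (fun j _ => by ring)
    rw [h1, h2, sum_uu_block hk, sub_zero]
  rw [hBk]
  have hbound := card_mul_bound hk (c := (2:ℝ)^(k^2 + k^4 + 3) / 2^(n^4)) (by positivity)
    (fun j => uu (Mn k j) * (Real.sin ((Mn k j:ℝ) * tn n) / ((Mn k j:ℝ) * tn n) - 1))
    (fun j hj => by
      simp only [mem_Icc] at hj
      have hx := x_pos k j n
      have hxle := xmax_bound (n := n) hj.2
      rw [abs_mul]
      exact mul_le_mul (uu_abs_le hk hj.1 hj.2)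
        (le_trans (sinc_near_one hx (le_trans hxle hxmax1)) hxle)
        (abs_nonneg _) (by positivity))
  apply le_trans hbound
  -- numeric: 2^(k^2) * (2 * (2^A / 2^(n^4))) ≤ (1/2)^k
  have e1 : (2:ℝ)^(2*k^2 + k^4 + 4) = 2^(k^2) * 2^(k^2 + k^4 + 3) * 2 := by
    rw [show 2*k^2 + k^4 + 4 = k^2 + (k^2 + k^4 + 3) + 1 by ring]
    rw [pow_add, pow_add, pow_one]
  have hA : (2:ℝ)^(k^2) * (2 * ((2:ℝ)^(k^2 + k^4 + 3) / 2^(n^4)))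
      = (2:ℝ)^(2*k^2 + k^4 + 4) / 2^(n^4) := by
    rw [e1]; ring
  rw [hA, div_pow, one_pow, div_le_div_iff₀ (by positivity) (by positivity)]
  calc (2:ℝ)^(2*k^2 + k^4 + 4) * 2^k = 2^(2*k^2 + k^4 + 4 + k) :=
        (pow_add 2 (2*k^2 + k^4 + 4) k).symm
    _ ≤ 2^(n^4) := pow2_le_pow2 hnf1
    _ = 1 * 2^(n^4) := by ring

/-- blocks above the resonant block -/
lemma Bk_small_high {k n : ℕ} (hn : 1 ≤ n) (hkn : n < k) : |Bk (tn n) k| ≤ (1/2)^k := by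
  have hk : 1 ≤ k := by omega
  have hnf2 := nf2 hn hkn
  have hinvx : ∀ j, 1 ≤ j → j ≤ Jn k →
      |Real.sin ((Mn k j:ℝ) * tn n) / ((Mn k j:ℝ) * tn n)| ≤ (2:ℝ)^(n^4) / 2^(k^4) := by
    intro j hj hjJ
    have hx := x_pos k j n
    have h1 : (2:ℝ)^(k^4) / 2^(n^4) ≤ (Mn k j:ℝ) * tn n := by
      have hNle : ((Nn k : ℕ):ℝ) ≤ (Mn k j : ℝ) := by exact_mod_cast Nn_le_Mn k j
      have hNk : ((Nn k : ℕ):ℝ) = (2:ℝ)^(k^4) := by rw [Nn]; push_cast; ring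
      have htn : tn n = 1 / 2^(n^4) := by rw [tn, Nn]; push_cast; rw [one_div]
      rw [htn, div_eq_mul_one_div ((2:ℝ)^(k^4)) ((2:ℝ)^(n^4))]
      exact mul_le_mul_of_nonneg_right (hNk ▸ hNle) (by positivity)
    calc |Real.sin ((Mn k j:ℝ) * tn n) / ((Mn k j:ℝ) * tn n)| ≤ 1 / ((Mn k j:ℝ) * tn n) :=
          sinc_abs_le_inv hx
      _ ≤ 1 / ((2:ℝ)^(k^4) / 2^(n^4)) := by
          apply div_le_div_of_nonneg_left (by norm_num) (by positivity) h1
      _ = (2:ℝ)^(n^4) / 2^(k^4) := by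
          rw [one_div_div]
  have hBk : Bk (tn n) k = ∑ j ∈ Icc 1 (Jn k),
      uu (Mn k j) * (Real.sin ((Mn k j:ℝ) * tn n) / ((Mn k j:ℝ) * tn n)) :=
    Finset.sum_congr rfl (fun j hj => by
      simp only [mem_Icc] at hj
      exact Bk_term_eq hk hj.1 hj.2)
  rw [hBk]
  have hbound := card_mul_bound hk (c := (2:ℝ)^(n^4) / 2^(k^4)) (by positivity)
    (fun j => uu (Mn k j) * (Real.sin ((Mn k j:ℝ) * tn n) / ((Mn k j:ℝ) * tn n)))
    (fun j hj => by
      simp only [mem_Icc] at hj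
      rw [abs_mul]
      exact mul_le_mul (uu_abs_le hk hj.1 hj.2) (hinvx j hj.1 hj.2)
        (abs_nonneg _) (by positivity))
  apply le_trans hbound
  have e1 : (2:ℝ)^(k^2 + 1 + n^4) = 2^(k^2) * 2^(n^4) * 2 := by
    rw [show k^2 + 1 + n^4 = k^2 + n^4 + 1 by ring]
    rw [pow_add, pow_add, pow_one]
  have hA : (2:ℝ)^(k^2) * (2 * ((2:ℝ)^(n^4) / 2^(k^4)))
      = (2:ℝ)^(k^2 + 1 + n^4) / 2^(k^4) := by
    rw [e1]; ring
  rw [hA, div_pow, one_pow, div_le_div_iff₀ (by positivity) (by positivity)]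
  calc (2:ℝ)^(k^2 + 1 + n^4) * 2^k = 2^(k^2 + 1 + n^4 + k) :=
        (pow_add 2 (k^2 + 1 + n^4) k).symm
    _ ≤ 2^(k^4) := pow2_le_pow2 (by omega)
    _ = 1 * 2^(k^4) := by ring

/-! ### Lower bound for the resonant block -/

lemma uu_edge {n j : ℕ} (hn : 1 ≤ n) (hj : 1 ≤ j) (hjJ : j ≤ Jn n)
    (hedge : j = 1 ∨ j = Jn n) : |uu (Mn n j)| ≤ 1/n := by
  rw [uu_eval hn hj hjJ]
  rcases hedge with h | h
  · subst h
    rw [show (1:ℕ)-1 = 0 from rfl, rho_zero, zero_sub, abs_neg]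
    exact rho_abs_le n 1
  · subst h
    rw [rho_top, sub_zero]
    exact rho_abs_le n _

lemma log_sum_lb {b : ℕ} (hb : 3 ≤ b) :
    Real.log ((b:ℝ)+1) - Real.log 3 ≤ ∑ i ∈ Icc 3 b, 1/(i:ℝ) := by
  induction b, hb using Nat.le_induction with
  | base =>
    rw [Finset.Icc_self, Finset.sum_singleton]
    have h1 : Real.log ((4:ℝ)/3) ≤ (4:ℝ)/3 - 1 := Real.log_le_sub_one_of_pos (by norm_num)
    have h2 : Real.log ((4:ℝ)/3) = Real.log 4 - Real.log 3 :=
      Real.log_div (by norm_num) (by norm_num)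
    have h3 : ((3:ℕ):ℝ) = 3 := by norm_num
    rw [h3, show ((3:ℝ)+1) = 4 by norm_num]
    linarith
  | succ m hm ih =>
    rw [Finset.sum_Icc_succ_top (by omega : 3 ≤ m + 1)]
    have h0 : (0:ℝ) < (m:ℝ)+1 := by positivity
    have h2 : Real.log (((m:ℝ)+2)/((m:ℝ)+1)) ≤ ((m:ℝ)+2)/((m:ℝ)+1) - 1 :=
      Real.log_le_sub_one_of_pos (by positivity)
    have h3 : ((m:ℝ)+2)/((m:ℝ)+1) - 1 = 1/((m:ℝ)+1) := by
      field_simp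
      norm_num
    have h4 : Real.log (((m:ℝ)+2)/((m:ℝ)+1)) = Real.log ((m:ℝ)+2) - Real.log ((m:ℝ)+1) :=
      Real.log_div (by positivity) (ne_of_gt h0)
    push_cast
    push_cast at ih
    rw [show ((m:ℝ) + 1 + 1) = (m:ℝ) + 2 by ring]
    linarith

lemma Jn_big {n : ℕ} (hn : 100 ≤ n) : 4 ≤ Jn n := by
  have : (2:ℕ)^2 ≤ 2^(n^2) := Nat.pow_le_pow_right (by norm_num) (by nlinarith)
  simpa [Jn] using this

lemma Bk_main {n : ℕ} (hn : 100 ≤ n) : 3 ≤ Bk (tn n) n := by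
  have hn1 : 1 ≤ n := by omega
  have hnR : (100:ℝ) ≤ (n:ℝ) := by exact_mod_cast hn
  have hnpos : (0:ℝ) < (n:ℝ) := by linarith
  set J := Jn n with hJdef
  have hJ4 : 4 ≤ J := Jn_big hn
  set L : ℕ → ℝ := fun j => if j = 1 ∨ j = J then -(1/(n:ℝ)) else 1/(4*(n:ℝ)*((j:ℝ)+1)) with hL
  -- termwise bound
  have hterm : ∀ j ∈ Icc 1 J, L j ≤ Gf (chi (tn n)) (n, j) := by
    intro j hj
    simp only [mem_Icc] at hj
    rw [Bk_term_eq hn1 hj.1 hj.2]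
    set x := (Mn n j : ℝ) * tn n with hxdef
    have hx : 0 < x := x_pos n j n
    by_cases hedge : j = 1 ∨ j = J
    · rw [hL]
      simp only [hedge, if_pos]
      have habs : |uu (Mn n j) * (Real.sin x / x)| ≤ 1/(n:ℝ) * 1 := by
        rw [abs_mul]
        exact mul_le_mul (uu_edge hn1 hj.1 hj.2 hedge) (sinc_abs_le_one hx)
          (abs_nonneg _) (by positivity)
      calc -(1/(n:ℝ)) = -(1/(n:ℝ) * 1) := by ring
        _ ≤ -|uu (Mn n j) * (Real.sin x / x)| := neg_le_neg habs
        _ ≤ uu (Mn n j) * (Real.sin x / x) := neg_abs_le _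
    · rw [hL]
      simp only [hedge, if_neg, not_false_iff]
      push_neg at hedge
      have hj2 : 2 ≤ j := by omega
      have hjJ1 : j + 1 ≤ J := by omega
      -- position of x
      have hNne : ((Nn n : ℕ):ℝ) ≠ 0 := by
        have := Nn_pos n; positivity
      have hNtn : ((Nn n : ℕ):ℝ) * tn n = 1 := by
        rw [tn]; field_simp
      have hxlow : ((j:ℝ)+1/2)*π ≤ x := by
        have h1 := Mn_ge n j
        calc ((j:ℝ)+1/2)*π = ((j:ℝ)+1/2)*π * (((Nn n : ℕ):ℝ) * tn n) := by rw [hNtn]; ring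
          _ = (((j:ℝ)+1/2)*π * ((Nn n : ℕ):ℝ)) * tn n := by ring
          _ ≤ (Mn n j : ℝ) * tn n := mul_le_mul_of_nonneg_right h1 (tn_pos n).le
      have hxhigh : x ≤ ((j:ℝ)+1/2)*π + tn n := by
        have h1 := Mn_le n j
        calc x ≤ (((j:ℝ)+1/2)*π * ((Nn n : ℕ):ℝ) + 1) * tn n :=
              mul_le_mul_of_nonneg_right h1 (tn_pos n).le
          _ = ((j:ℝ)+1/2)*π * (((Nn n : ℕ):ℝ) * tn n) + tn n := by ring
          _ = ((j:ℝ)+1/2)*π + tn n := by rw [hNtn]; ring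
      set e := x - ((j:ℝ)+1/2)*π with hedef
      have he0 : 0 ≤ e := by simp [hedef]; linarith
      have he1 : e ≤ 1/2 := by
        have := tn_le_half hn1
        simp [hedef]; linarith
      have hsin : Real.sin x = (-1)^j * Real.cos e := by
        rw [show x = ((j:ℝ)+1/2)*π + e by rw [hedef]; ring, sin_shift]
      have hcos : (1:ℝ)/2 ≤ Real.cos e := by
        have h1 : 1 - e^2/2 ≤ Real.cos e := Real.one_sub_sq_div_two_le_cos
        nlinarith
      have hpi4 : π ≤ 4 := pi_le_four
      have hjc : (0:ℝ) ≤ (j:ℝ) := Nat.cast_nonneg j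
      have hxub : x ≤ 4*((j:ℝ)+1) := by
        have := tn_le_half hn1
        nlinarith
      rw [uu_middle hn1 hj2 hjJ1, hsin]
      have h11 : ((-1:ℝ)^j) * ((-1)^j) = 1 := by
        rw [← pow_add, ← two_mul, pow_mul]
        norm_num
      have heq : (-1:ℝ)^j * (2/(n:ℝ)) * ((-1)^j * Real.cos e / x)
          = 2 * Real.cos e / ((n:ℝ) * x) := by
        have hstep : (-1:ℝ)^j * (2/(n:ℝ)) * ((-1)^j * Real.cos e / x)
            = ((-1:ℝ)^j * (-1)^j) * ((2/(n:ℝ)) * (Real.cos e / x)) := by ring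
        rw [hstep, h11, one_mul, div_mul_div_comm]
      rw [heq]
      have hfinal : 1/(4*(n:ℝ)*((j:ℝ)+1)) = 1 / ((n:ℝ) * (4*((j:ℝ)+1))) := by
        rw [show 4*(n:ℝ)*((j:ℝ)+1) = (n:ℝ) * (4*((j:ℝ)+1)) by ring]
      rw [hfinal]
      apply div_le_div₀ (by linarith) (by linarith) (by positivity)
        (mul_le_mul_of_nonneg_left hxub (by positivity))
  -- sum over the lower bounds
  have hsum1 : ∑ j ∈ Icc 1 J, L j ≤ Bk (tn n) n := Finset.sum_le_sum hterm
  have hins1 : Icc 1 J = insert 1 (Icc 2 J) := by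
    ext x; simp only [mem_Icc, mem_insert]; omega
  have hins2 : Icc 2 J = insert J (Icc 2 (J-1)) := by
    ext x; simp only [mem_Icc, mem_insert]; omega
  have hnot1 : (1:ℕ) ∉ Icc 2 J := by simp [mem_Icc]
  have hnotJ : J ∉ Icc 2 (J-1) := by simp [mem_Icc]; omega
  have hsplit : ∑ j ∈ Icc 1 J, L j
      = L 1 + (L J + ∑ j ∈ Icc 2 (J-1), L j) := by
    rw [hins1, Finset.sum_insert hnot1, hins2, Finset.sum_insert hnotJ]
  have hL1 : L 1 = -(1/(n:ℝ)) := by simp [hL]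
  have hLJ : L J = -(1/(n:ℝ)) := by simp [hL]
  have hLmid : ∀ j ∈ Icc 2 (J-1), L j = 1/(4*(n:ℝ)*((j:ℝ)+1)) := by
    intro j hj
    simp only [mem_Icc] at hj
    simp only [hL]
    rw [if_neg (show ¬(j = 1 ∨ j = J) by rintro (h|h) <;> omega)]
  have hmid_sum : ∑ j ∈ Icc 2 (J-1), L j = ∑ i ∈ Icc 3 J, 1/(4*(n:ℝ)*(i:ℝ)) := by
    rw [Finset.sum_congr rfl hLmid]
    apply Finset.sum_nbij' (fun j => j + 1) (fun i => i - 1)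
    · intro j hj; simp only [mem_Icc] at *; omega
    · intro i hi; simp only [mem_Icc] at *; omega
    · intro j hj; omega
    · intro i hi; simp only [mem_Icc] at hi; omega
    · intro j hj
      push_cast
      norm_num
  have hmid_factor : ∑ i ∈ Icc 3 J, 1/(4*(n:ℝ)*(i:ℝ))
      = (1/(4*(n:ℝ))) * ∑ i ∈ Icc 3 J, 1/(i:ℝ) := by
    rw [Finset.mul_sum]
    apply Finset.sum_congr rfl
    intro i hi
    rw [one_div_mul_one_div]
  have hHlb : Real.log ((J:ℝ)+1) - Real.log 3 ≤ ∑ i ∈ Icc 3 J, 1/(i:ℝ) := log_sum_lb (by omega)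
  have hlogJ : (n:ℝ)^2 * Real.log 2 ≤ Real.log ((J:ℝ)+1) := by
    have h1 : (J:ℝ) = 2^(n^2) := by rw [hJdef, Jn]; push_cast; ring
    have h2 : Real.log ((J:ℝ)) = ((n^2 : ℕ):ℝ) * Real.log 2 := by rw [h1, Real.log_pow]
    have hJpos : (0:ℝ) < (J:ℝ) := by
      have := Jn_pos n; rw [hJdef]; exact_mod_cast this
    have h3 : Real.log (J:ℝ) ≤ Real.log ((J:ℝ)+1) :=
      Real.log_le_log (by linarith) (by linarith)
    have h4 : ((n^2 : ℕ):ℝ) = (n:ℝ)^2 := by push_cast; ring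
    rw [h4] at h2
    linarith
  have hlog3 : Real.log 3 ≤ 2 := by
    have := Real.log_le_sub_one_of_pos (show (0:ℝ) < 3 by norm_num)
    linarith
  have hlog2 : (0.6931471803:ℝ) < Real.log 2 := Real.log_two_gt_d9
  have hA : -(1/(n:ℝ)) + (-(1/(n:ℝ)) + (1/(4*(n:ℝ))) * ∑ i ∈ Icc 3 J, 1/(i:ℝ))
      ≤ Bk (tn n) n := by
    have : ∑ j ∈ Icc 1 J, L j
        = -(1/(n:ℝ)) + (-(1/(n:ℝ)) + (1/(4*(n:ℝ))) * ∑ i ∈ Icc 3 J, 1/(i:ℝ)) := by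
      rw [hsplit, hL1, hLJ, hmid_sum, hmid_factor]
    rw [← this]
    exact hsum1
  set S := ∑ i ∈ Icc 3 J, 1/(i:ℝ) with hSdef
  have hS : (0.6931471803:ℝ) * (n:ℝ)^2 - 2 ≤ S := by
    have h5 : (0.6931471803:ℝ) * (n:ℝ)^2 ≤ (n:ℝ)^2 * Real.log 2 := by
      nlinarith [sq_nonneg (n:ℝ)]
    linarith
  have hinv : (1/(n:ℝ)) * (n:ℝ) = 1 := one_div_mul_cancel (ne_of_gt hnpos)
  have h7 : 3 + 2*(1/(n:ℝ)) ≤ (1/(4*(n:ℝ))) * (0.6931471803*(n:ℝ)^2 - 2) := by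
    have hXdiv : (1/(4*(n:ℝ))) * (0.6931471803*(n:ℝ)^2 - 2)
        = (0.6931471803*(n:ℝ)^2 - 2) / (4*(n:ℝ)) := by ring
    rw [hXdiv, le_div_iff₀ (by positivity)]
    nlinarith [hinv]
  have h8 : (1/(4*(n:ℝ))) * (0.6931471803*(n:ℝ)^2 - 2) ≤ (1/(4*(n:ℝ))) * S :=
    mul_le_mul_of_nonneg_left hS (by positivity)
  have h9 : (1/(n:ℝ)) > 0 := by positivity
  linarith [hA, h7, h8]

/-! ### Assembly: summability and the lower bound at `t = tn n` -/

lemma chi_vanish {t : ℝ} : ∀ m, 1 ≤ m →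
    (∀ n j, 1 ≤ n → 1 ≤ j → j ≤ Jn n → m ≠ Mn n j) → chi t m = 0 := by
  intro m _ h
  rw [chi, uu_eq_zero h]
  simp

lemma summable_chi_succ {t : ℝ} (ht : 0 < t) : Summable (fun m : ℕ => chi t (m+1)) := by
  apply Summable.of_abs
  refine Summable.of_nonneg_of_le (fun m => abs_nonneg _) ?_ (summable_hyp1.mul_left (1/t))
  intro m
  have hx : (0:ℝ) < ((m+1 : ℕ):ℝ) * t := by
    have : (0:ℝ) < ((m+1 : ℕ):ℝ) := by exact_mod_cast Nat.succ_pos m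
    positivity
  rw [chi, abs_div, abs_of_pos hx, abs_mul]
  have h1 : |uu (m+1)| * |Real.sin (((m+1:ℕ):ℝ) * t)| ≤ |uu (m+1)| * 1 :=
    mul_le_mul_of_nonneg_left (Real.abs_sin_le_one _) (abs_nonneg _)
  calc |uu (m+1)| * |Real.sin (((m+1:ℕ):ℝ) * t)| / (((m+1:ℕ):ℝ) * t)
      ≤ (|uu (m+1)| * 1) / (((m+1:ℕ):ℝ) * t) := by
        apply div_le_div_of_nonneg_right h1 (le_of_lt hx)
    _ = (1/t) * (|uu (m+1)| / ((m:ℝ)+1)) := by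
        rw [mul_one]
        push_cast
        rw [← div_div, div_eq_inv_mul, one_div]

lemma hasSum_Bk (t : ℝ) (ht : 0 < t) :
    HasSum (Bk t) (∑' m : ℕ, chi t (m+1)) := by
  have hhs : HasSum (fun m : ℕ => chi t (m+1)) (∑' m : ℕ, chi t (m+1)) :=
    (summable_chi_succ ht).hasSum
  have hG : HasSum (Gf (chi t)) (∑' m : ℕ, chi t (m+1)) :=
    (hasSum_transfer chi_vanish _).mp hhs
  have hfib : ∀ k, HasSum (fun j => Gf (chi t) (k, j)) (Bk t k) := by
    intro k
    apply hasSum_sum_of_ne_finset_zero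
    intro j hj
    rw [Gf, if_neg]
    rintro ⟨a, b, c⟩
    exact hj (by simp only [mem_Icc]; exact ⟨b, c⟩)
  exact hG.prod_fiberwise hfib

lemma tsum_lower {n : ℕ} (hn : 100 ≤ n) : 1 ≤ ∑' m : ℕ, chi (tn n) (m+1) := by
  set t := tn n with htdef
  have hB := hasSum_Bk t (tn_pos n)
  have hBsummable : Summable (Bk t) := hB.summable
  have heq : ∑' k, Bk t k = ∑' m : ℕ, chi t (m+1) := hB.tsum_eq
  have hsplit : ∑' k, Bk t k = Bk t n + ∑' k, ite (k = n) 0 (Bk t k) :=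
    Summable.tsum_eq_add_tsum_ite hBsummable n
  have hptw : ∀ k, |ite (k = n) 0 (Bk t k)| ≤ ((1:ℝ)/2)^k := by
    intro k
    split_ifs with h
    · simp
    · rcases Nat.eq_zero_or_pos k with hk0 | hk1
      · subst hk0
        rw [htdef, Bk_zero]
        norm_num
      · rcases lt_or_gt_of_ne h with hlt | hgt
        · exact Bk_small_low hk1 hlt
        · exact Bk_small_high (by omega) hgt
  have habs_summable : Summable (fun k => |ite (k = n) 0 (Bk t k)|) :=
    Summable.of_nonneg_of_le (fun k => abs_nonneg _) hptw summable_geometric_two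
  have hrest : |∑' k, ite (k = n) 0 (Bk t k)| ≤ 2 := by
    calc |∑' k, ite (k = n) 0 (Bk t k)| ≤ ∑' k, |ite (k = n) 0 (Bk t k)| := by
          have := norm_tsum_le_tsum_norm (f := fun k => ite (k = n) 0 (Bk t k))
            (by simpa [Real.norm_eq_abs] using habs_summable)
          simpa [Real.norm_eq_abs] using this
      _ ≤ ∑' k : ℕ, ((1:ℝ)/2)^k := Summable.tsum_le_tsum hptw habs_summable summable_geometric_two
      _ = 2 := tsum_geometric_two
  have hmain : 3 ≤ Bk t n := Bk_main hn
  have : 1 ≤ Bk t n + ∑' k, ite (k = n) 0 (Bk t k) := by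
    have h1 : -(2:ℝ) ≤ ∑' k, ite (k = n) 0 (Bk t k) := by
      have := abs_le.mp hrest
      linarith [this.1]
    linarith
  rw [← heq, hsplit]
  exact this

lemma tendsto_tn : Tendsto tn atTop (nhdsWithin 0 (Set.Ioi 0)) := by
  apply tendsto_nhdsWithin_of_tendsto_nhds_of_eventually_within
  · -- tends to 0
    apply squeeze_zero (fun n => (tn_pos n).le) (g := fun n => ((1:ℝ)/2)^n)
    · intro n
      rw [tn]
      have h1 : (2:ℝ)^n ≤ ((Nn n : ℕ) : ℝ) := by
        have : (2:ℕ)^n ≤ Nn n := by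
          rw [Nn]
          exact Nat.pow_le_pow_right (by norm_num) (Nat.le_self_pow (by norm_num) n)
        exact_mod_cast this
      have h2 : (0:ℝ) < (2:ℝ)^n := by positivity
      calc ((Nn n : ℕ) : ℝ)⁻¹ ≤ ((2:ℝ)^n)⁻¹ := inv_anti₀ h2 h1
        _ = ((1:ℝ)/2)^n := by
            rw [← inv_pow]
            norm_num
    · exact tendsto_pow_atTop_nhds_zero_of_lt_one (by norm_num) (by norm_num)
  · exact Filter.Eventually.of_forall (fun n => tn_pos n)

end R1CE

/-- Ordinary convergence does not imply Riemann `(R,1)` summability. -/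
theorem convergence_not_implies_R1 :
    ∃ (u : ℕ → ℝ) (s : ℝ),
      Summable (fun m : ℕ => |u (m + 1)| / (m + 1)) ∧
      Tendsto (fun n : ℕ => ∑ m ∈ Finset.Icc 1 n, u m) atTop (nhds s) ∧
      ¬ Tendsto
        (fun t : ℝ => ∑' m : ℕ, u (m + 1) * Real.sin ((m + 1) * t) / ((m + 1) * t))
        (nhdsWithin 0 (Set.Ioi 0)) (nhds s) := by
  refine ⟨R1CE.uu, 0, R1CE.summable_hyp1, R1CE.tendsto_partial_sums, ?_⟩
  intro H
  have hcomp := H.comp R1CE.tendsto_tn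
  have heq : ∀ n : ℕ,
      ((fun t : ℝ => ∑' m : ℕ, R1CE.uu (m + 1) * Real.sin ((m + 1) * t) / ((m + 1) * t))
        ∘ R1CE.tn) n
      = ∑' m : ℕ, R1CE.chi (R1CE.tn n) (m+1) := by
    intro n
    simp only [Function.comp]
    apply tsum_congr
    intro m
    rw [R1CE.chi]
    push_cast
    ring_nf
  rw [NormedAddCommGroup.tendsto_nhds_zero] at hcomp
  have h1 := hcomp 1 one_pos
  rw [Filter.eventually_atTop] at h1
  obtain ⟨N, hN⟩ := h1
  have h2 := hN (max N 100) (le_max_left _ _)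
  rw [heq (max N 100)] at h2
  have h3 := R1CE.tsum_lower (n := max N 100) (le_max_right _ _)
  rw [Real.norm_eq_abs] at h2
  have := le_abs_self (∑' m : ℕ, R1CE.chi (R1CE.tn (max N 100)) (m+1))
  linarith [h3, h2, abs_le.mp (le_of_lt h2)]
end

section
/- There exists a sequence (u_m)_{m≥1} of real numbers with ∑ |u_m|/m < ∞ that is (R,1)-summable, i.e. lim_{t→0⁺} ∑_{m≥1} u_m (sin mt)/(mt) exists, but whose partial sums ∑_{m≤n} u_m do not converge. -/
open Filter Finset Real

open Topology Set Function

/- The counterexample: `u` is supported near the points `2^(k+4)`, with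
`u (2^(k+4) - 1) = -(2^(k+4)-1)/2^(k+4)` and `u (2^(k+4)+1) = (2^(k+4)+1)/2^(k+4)`.
We split `u` into the two halves `uL` and `uR`. -/

open scoped Classical in
noncomputable def uL (m : ℕ) : ℝ :=
  if ∃ k : ℕ, m + 1 = 2 ^ (k + 4) then -(m : ℝ) / (m + 1) else 0

open scoped Classical in
noncomputable def uR (m : ℕ) : ℝ :=
  if ∃ k : ℕ, m = 2 ^ (k + 4) + 1 then (m : ℝ) / ((m : ℝ) - 1) else 0

noncomputable def uu (m : ℕ) : ℝ := uL m + uR m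

/-- The generic summand of the Riemann means. -/
noncomputable def trm (v : ℕ → ℝ) (t : ℝ) (n : ℕ) : ℝ :=
  v n * Real.sin (n * t) / (n * t)

lemma hV16 (k : ℕ) : 16 ≤ 2 ^ (k + 4) := by
  calc (16 : ℕ) = 2 ^ 4 := by norm_num
  _ ≤ 2 ^ (k + 4) := Nat.pow_le_pow_right (by norm_num) (by omega)

lemma dvd16 (k : ℕ) : 2 ^ (k + 4) = 16 * 2 ^ k := by rw [pow_add]; ring

lemma Vmono : StrictMono fun k : ℕ => 2 ^ (k + 4) :=
  fun a b h => Nat.pow_lt_pow_right (by norm_num) (by omega)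

lemma castV1 (k : ℕ) : ((2 ^ (k + 4) - 1 : ℕ) : ℝ) = 2 ^ (k + 4) - 1 := by
  have h := hV16 k
  rw [Nat.cast_sub (by omega)]
  push_cast
  ring

lemma uL_eval (k : ℕ) :
    uL (2 ^ (k + 4) - 1) = -((2 : ℝ) ^ (k + 4) - 1) / 2 ^ (k + 4) := by
  have h16 := hV16 k
  rw [uL, if_pos ⟨k, by omega⟩, castV1 k]
  rw [sub_add_cancel]

lemma uR_eval (k : ℕ) :
    uR (2 ^ (k + 4) + 1) = ((2 : ℝ) ^ (k + 4) + 1) / 2 ^ (k + 4) := by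
  rw [uR, if_pos ⟨k, rfl⟩]
  push_cast
  rw [add_sub_cancel_right]

lemma uL_zero {m : ℕ} (h : ∀ k : ℕ, m + 1 ≠ 2 ^ (k + 4)) : uL m = 0 := by
  rw [uL, if_neg]; rintro ⟨k, hk⟩; exact h k hk

lemma uR_zero {m : ℕ} (h : ∀ k : ℕ, m ≠ 2 ^ (k + 4) + 1) : uR m = 0 := by
  rw [uR, if_neg]; rintro ⟨k, hk⟩; exact h k hk

lemma uR_at_lo (k : ℕ) : uR (2 ^ (k + 4) - 1) = 0 := by
  apply uR_zero
  intro j hj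
  have h16k := hV16 k; have h16j := hV16 j
  have hk := dvd16 k; have hj' := dvd16 j
  omega

/-- `|sin x - sin y| ≤ |x - y|`. -/
lemma sin_diff_abs_le (x y : ℝ) : |Real.sin x - Real.sin y| ≤ |x - y| := by
  rw [Real.sin_sub_sin]
  have h1 : |Real.sin ((x - y) / 2)| ≤ |x - y| / 2 := by
    have h := Real.abs_sin_le_abs (x := (x - y) / 2)
    rwa [abs_div, abs_two] at h
  have h2 : |Real.cos ((x + y) / 2)| ≤ 1 := Real.abs_cos_le_one _
  calc |2 * Real.sin ((x - y) / 2) * Real.cos ((x + y) / 2)|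
      = 2 * |Real.sin ((x - y) / 2)| * |Real.cos ((x + y) / 2)| := by
        rw [abs_mul, abs_mul, abs_two]
    _ ≤ 2 * (|x - y| / 2) * 1 := by gcongr
    _ = |x - y| := by ring

lemma sumV : Summable fun k : ℕ => ((2 : ℝ) ^ (k + 4))⁻¹ := by
  have h := (summable_nat_add_iff (f := fun n : ℕ => ((1 : ℝ) / 2) ^ n) 4).mpr
    summable_geometric_two
  refine h.congr fun k => ?_
  rw [div_pow, one_pow, one_div]

/-- Summability of `|uL m| / m`. -/
lemma SL : Summable fun m : ℕ => |uL m| / (m : ℝ) := by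
  have hinj : Function.Injective fun k : ℕ => 2 ^ (k + 4) - 1 := by
    intro a b h
    have h' : 2 ^ (a + 4) - 1 = 2 ^ (b + 4) - 1 := h
    have ha := hV16 a; have hb := hV16 b
    exact Vmono.injective (by omega : 2 ^ (a + 4) = 2 ^ (b + 4))
  refine (Function.Injective.summable_iff hinj ?_).mp ?_
  · intro m hm
    have h0 : uL m = 0 := by
      apply uL_zero
      intro k hk
      exact hm ⟨k, show 2 ^ (k + 4) - 1 = m by have := hV16 k; omega⟩
    simp [h0]
  · apply Summable.of_nonneg_of_le (fun k => by simp only [Function.comp_apply]; positivity)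
      (fun k => ?_) sumV
    show |uL (2 ^ (k + 4) - 1)| / ((2 ^ (k + 4) - 1 : ℕ) : ℝ) ≤ ((2 : ℝ) ^ (k + 4))⁻¹
    have hV : (16 : ℝ) ≤ (2 : ℝ) ^ (k + 4) := by
      have := hV16 k
      exact_mod_cast (by exact_mod_cast this : (16 : ℝ) ≤ ((2 ^ (k + 4) : ℕ) : ℝ))
    rw [uL_eval, castV1]
    rw [abs_div, abs_neg, abs_of_nonneg (by linarith), abs_of_nonneg (by linarith)]
    apply le_of_eq
    have hne1 : (2 : ℝ) ^ (k + 4) - 1 ≠ 0 := by intro h0; rw [sub_eq_zero] at h0; linarith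
    rw [div_right_comm, div_self hne1, one_div]

/-- Summability of `|uR m| / m`. -/
lemma SR : Summable fun m : ℕ => |uR m| / (m : ℝ) := by
  have hinj : Function.Injective fun k : ℕ => 2 ^ (k + 4) + 1 := by
    intro a b h
    have h' : 2 ^ (a + 4) + 1 = 2 ^ (b + 4) + 1 := h
    exact Vmono.injective (by omega : 2 ^ (a + 4) = 2 ^ (b + 4))
  refine (Function.Injective.summable_iff hinj ?_).mp ?_
  · intro m hm
    have h0 : uR m = 0 := by
      apply uR_zero
      intro k hk
      exact hm ⟨k, show 2 ^ (k + 4) + 1 = m from hk.symm⟩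
    simp [h0]
  · apply Summable.of_nonneg_of_le (fun k => by simp only [Function.comp_apply]; positivity)
      (fun k => ?_) sumV
    show |uR (2 ^ (k + 4) + 1)| / ((2 ^ (k + 4) + 1 : ℕ) : ℝ) ≤ ((2 : ℝ) ^ (k + 4))⁻¹
    have hV : (16 : ℝ) ≤ (2 : ℝ) ^ (k + 4) := by
      have := hV16 k
      exact_mod_cast (by exact_mod_cast this : (16 : ℝ) ≤ ((2 ^ (k + 4) : ℕ) : ℝ))
    have hcast : ((2 ^ (k + 4) + 1 : ℕ) : ℝ) = (2 : ℝ) ^ (k + 4) + 1 := by push_cast; ring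
    rw [uR_eval, hcast]
    rw [abs_div, abs_of_nonneg (by linarith), abs_of_nonneg (by linarith)]
    apply le_of_eq
    have hne1 : (2 : ℝ) ^ (k + 4) + 1 ≠ 0 := by positivity
    rw [div_right_comm, div_self hne1, one_div]

/-- `sin (c t) / (c t) → 1` as `t → 0⁺`. -/
lemma tendsto_sinc {c : ℝ} (hc : 0 < c) :
    Tendsto (fun t : ℝ => Real.sin (c * t) / (c * t)) (𝓝[>] (0 : ℝ)) (𝓝 1) := by
  have h1 : Tendsto (fun x : ℝ => Real.sin x / x) (𝓝[≠] (0 : ℝ)) (𝓝 1) := by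
    have h := Real.hasDerivAt_sin 0
    rw [hasDerivAt_iff_tendsto_slope] at h
    rw [Real.cos_zero] at h
    refine Tendsto.congr' ?_ h
    filter_upwards [self_mem_nhdsWithin] with x hx
    simp [slope_def_field]
  have h2 : Tendsto (fun t : ℝ => c * t) (𝓝[>] (0 : ℝ)) (𝓝[≠] (0 : ℝ)) := by
    rw [tendsto_nhdsWithin_iff]
    constructor
    · have h3 : Tendsto (fun t : ℝ => c * t) (𝓝 (0 : ℝ)) (𝓝 (c * 0)) :=
        (continuous_const.mul continuous_id).tendsto 0
      rw [mul_zero] at h3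
      exact h3.mono_left nhdsWithin_le_nhds
    · filter_upwards [self_mem_nhdsWithin] with t ht
      simp only [Set.mem_compl_iff, Set.mem_singleton_iff]
      exact (mul_pos hc ht).ne'
  exact h1.comp h2

/-- Each term of the Riemann mean tends to its coefficient. -/
lemma tendsto_trm (v : ℕ → ℝ) {n : ℕ} (hn : 0 < n) :
    Tendsto (fun t : ℝ => trm v t n) (𝓝[>] (0 : ℝ)) (𝓝 (v n)) := by
  have hc : (0 : ℝ) < (n : ℝ) := by exact_mod_cast hn
  have h := (tendsto_sinc hc).const_mul (v n)
  rw [mul_one] at h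
  refine h.congr fun t => ?_
  rw [trm, mul_div_assoc]

/-- Summability of the Riemann mean terms, for `t > 0`. -/
lemma summable_trm (v : ℕ → ℝ) (hv : Summable fun m : ℕ => |v m| / (m : ℝ))
    {t : ℝ} (ht : 0 < t) : Summable fun m : ℕ => trm v t (m + 1) := by
  apply Summable.of_abs
  apply Summable.of_nonneg_of_le (fun m => abs_nonneg _) (fun m => ?_)
    (Summable.mul_left (1 / t) ((summable_nat_add_iff 1).mpr hv))
  show |trm v t (m + 1)| ≤ 1 / t * (|v (m + 1)| / ((m + 1 : ℕ) : ℝ))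
  have hn : (0 : ℝ) < ((m + 1 : ℕ) : ℝ) := by exact_mod_cast Nat.succ_pos m
  rw [trm, abs_div, abs_mul, abs_of_pos (mul_pos hn ht)]
  calc |v (m + 1)| * |Real.sin (((m + 1 : ℕ) : ℝ) * t)| / (((m + 1 : ℕ) : ℝ) * t)
      ≤ |v (m + 1)| * 1 / (((m + 1 : ℕ) : ℝ) * t) := by
        gcongr
        exact Real.abs_sin_le_one _
    _ = 1 / t * (|v (m + 1)| / ((m + 1 : ℕ) : ℝ)) := by
        rw [mul_one, one_div, inv_mul_eq_div, div_div]

/-- Regrouping of the shifted sum over the support. -/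
lemma tsum_shift (v : ℕ → ℝ) (g : ℕ → ℕ) (hg : Function.Injective g)
    (hsupp : ∀ m : ℕ, v (m + 1) ≠ 0 → ∃ k, g k = m) (t : ℝ) :
    ∑' m : ℕ, trm v t (m + 1) = ∑' k : ℕ, trm v t (g k + 1) := by
  refine (Function.Injective.tsum_eq hg ?_).symm
  intro m hm
  simp only [Function.mem_support, ne_eq] at hm
  have hv : v (m + 1) ≠ 0 := by
    intro h0
    exact hm (by simp [trm, h0])
  exact hsupp m hv

/-- Riemann `(R,1)` summability does not imply ordinary convergence. -/
theorem R1_not_implies_convergence :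
    ∃ (u : ℕ → ℝ) (s : ℝ),
      Summable (fun m : ℕ => |u (m + 1)| / (m + 1)) ∧
      Tendsto
        (fun t : ℝ => ∑' m : ℕ, u (m + 1) * Real.sin ((m + 1) * t) / ((m + 1) * t))
        (nhdsWithin 0 (Set.Ioi 0)) (nhds s) ∧
      ¬ ∃ L : ℝ, Tendsto (fun n : ℕ => ∑ m ∈ Finset.Icc 1 n, u m) atTop (nhds L) := by
  refine ⟨uu, ∑' k : ℕ, (uL (2 ^ (k + 4) - 1) + uR (2 ^ (k + 4) + 1)), ?_, ?_, ?_⟩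
  · -- Summability of |u (m+1)| / (m+1)
    have hS : Summable fun m : ℕ => (|uL (m + 1)| + |uR (m + 1)|) / ((m + 1 : ℕ) : ℝ) := by
      have := ((summable_nat_add_iff 1).mpr SL).add ((summable_nat_add_iff 1).mpr SR)
      refine this.congr fun m => ?_
      rw [add_div]
    apply Summable.of_nonneg_of_le (fun m => by positivity) (fun m => ?_) hS
    have hcast : ((m + 1 : ℕ) : ℝ) = (m : ℝ) + 1 := by push_cast; ring
    rw [← hcast]
    show |uu (m + 1)| / ((m + 1 : ℕ) : ℝ) ≤ _
    rw [uu]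
    gcongr
    · exact abs_add_le _ _
  · -- The Riemann means converge
    set s : ℝ := ∑' k : ℕ, (uL (2 ^ (k + 4) - 1) + uR (2 ^ (k + 4) + 1)) with hs
    -- dominated convergence for the blockwise sums
    have hmain : Tendsto
        (fun t : ℝ => ∑' k : ℕ, (trm uL t (2 ^ (k + 4) - 1) + trm uR t (2 ^ (k + 4) + 1)))
        (𝓝[>] (0 : ℝ)) (𝓝 s) := by
      rw [hs]
      apply tendsto_tsum_of_dominated_convergence
        (bound := fun k : ℕ => 2 * ((2 : ℝ) ^ (k + 4))⁻¹) (sumV.mul_left 2)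
      · intro k
        have h1 : 0 < 2 ^ (k + 4) - 1 := by have := hV16 k; omega
        have h2 : 0 < 2 ^ (k + 4) + 1 := by omega
        exact (tendsto_trm uL h1).add (tendsto_trm uR h2)
      · filter_upwards [self_mem_nhdsWithin] with t ht
        intro k
        have ht' : (0 : ℝ) < t := ht
        have hV : (16 : ℝ) ≤ (2 : ℝ) ^ (k + 4) := by
          have := hV16 k
          exact_mod_cast (by exact_mod_cast this : (16 : ℝ) ≤ ((2 ^ (k + 4) : ℕ) : ℝ))
        set V : ℝ := (2 : ℝ) ^ (k + 4) with hVdef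
        have hcast1 : ((2 ^ (k + 4) - 1 : ℕ) : ℝ) = V - 1 := castV1 k
        have hcast2 : ((2 ^ (k + 4) + 1 : ℕ) : ℝ) = V + 1 := by
          rw [hVdef]; push_cast; ring
        have hG : trm uL t (2 ^ (k + 4) - 1) + trm uR t (2 ^ (k + 4) + 1)
            = (Real.sin ((V + 1) * t) - Real.sin ((V - 1) * t)) / (V * t) := by
          rw [trm, trm, uL_eval, uR_eval, hcast1, hcast2, ← hVdef]
          have hV0 : V ≠ 0 := by positivity
          have hVm : V - 1 ≠ 0 := by intro h0; rw [sub_eq_zero] at h0; rw [h0] at hV; norm_num at hV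
          have hVp : V + 1 ≠ 0 := by positivity
          field_simp
          ring
        rw [Real.norm_eq_abs, hG, abs_div, abs_of_pos (by positivity : (0:ℝ) < V * t)]
        calc |Real.sin ((V + 1) * t) - Real.sin ((V - 1) * t)| / (V * t)
            ≤ |(V + 1) * t - (V - 1) * t| / (V * t) :=
              (div_le_div_iff_of_pos_right (by positivity)).mpr (sin_diff_abs_le _ _)
          _ = 2 * t / (V * t) := by
              congr 1
              rw [abs_of_pos (by nlinarith : (0:ℝ) < (V + 1) * t - (V - 1) * t)]
              ring
          _ = 2 * V⁻¹ := by field_simp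
    -- identify the two functions on `Ioi 0`
    apply hmain.congr'
    filter_upwards [self_mem_nhdsWithin] with t ht
    have ht' : (0 : ℝ) < t := ht
    -- rewrite statement summand via `trm`
    have hstep1 : (fun m : ℕ => uu (m + 1) * Real.sin (((m : ℝ) + 1) * t) / (((m : ℝ) + 1) * t))
        = fun m : ℕ => trm uL t (m + 1) + trm uR t (m + 1) := by
      funext m
      have hcast : ((m : ℝ) + 1) = ((m + 1 : ℕ) : ℝ) := by push_cast; ring
      rw [hcast, uu, trm, trm, add_mul, add_div]
    have hL := summable_trm uL SL ht'
    have hR := summable_trm uR SR ht'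
    have hsplit : ∑' m : ℕ, (trm uL t (m + 1) + trm uR t (m + 1))
        = (∑' m : ℕ, trm uL t (m + 1)) + ∑' m : ℕ, trm uR t (m + 1) := Summable.tsum_add hL hR
    have hinjL : Function.Injective fun k : ℕ => 2 ^ (k + 4) - 2 := by
      intro a b h
      have h' : 2 ^ (a + 4) - 2 = 2 ^ (b + 4) - 2 := h
      have ha := hV16 a; have hb := hV16 b
      exact Vmono.injective (by omega : 2 ^ (a + 4) = 2 ^ (b + 4))
    have hinjR : Function.Injective fun k : ℕ => 2 ^ (k + 4) := fun a b h => Vmono.injective h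
    have hshiftL : ∑' m : ℕ, trm uL t (m + 1) = ∑' k : ℕ, trm uL t (2 ^ (k + 4) - 2 + 1) := by
      apply tsum_shift uL (fun k => 2 ^ (k + 4) - 2) hinjL
      intro m hv
      by_contra hcon
      push_neg at hcon
      refine hv (uL_zero fun k hk => ?_)
      have := hV16 k
      exact hcon k (by omega)
    have hshiftR : ∑' m : ℕ, trm uR t (m + 1) = ∑' k : ℕ, trm uR t (2 ^ (k + 4) + 1) := by
      apply tsum_shift uR (fun k => 2 ^ (k + 4)) hinjR
      intro m hv
      by_contra hcon
      push_neg at hcon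
      refine hv (uR_zero fun k hk => ?_)
      exact hcon k (by omega)
    have hLk : Summable fun k : ℕ => trm uL t (2 ^ (k + 4) - 2 + 1) :=
      hL.comp_injective hinjL
    have hRk : Summable fun k : ℕ => trm uR t (2 ^ (k + 4) + 1) :=
      hR.comp_injective hinjR
    have hidx : ∀ k : ℕ, 2 ^ (k + 4) - 2 + 1 = 2 ^ (k + 4) - 1 := by
      intro k; have := hV16 k; omega
    calc (fun t : ℝ => ∑' k : ℕ, (trm uL t (2 ^ (k + 4) - 1) + trm uR t (2 ^ (k + 4) + 1))) t
        = ∑' k : ℕ, (trm uL t (2 ^ (k + 4) - 2 + 1) + trm uR t (2 ^ (k + 4) + 1)) := by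
          simp only []
          exact tsum_congr fun k => by rw [hidx k]
      _ = (∑' k : ℕ, trm uL t (2 ^ (k + 4) - 2 + 1)) + ∑' k : ℕ, trm uR t (2 ^ (k + 4) + 1) :=
          Summable.tsum_add hLk hRk
      _ = (∑' m : ℕ, trm uL t (m + 1)) + ∑' m : ℕ, trm uR t (m + 1) := by
          rw [hshiftL, hshiftR]
      _ = ∑' m : ℕ, (trm uL t (m + 1) + trm uR t (m + 1)) := hsplit.symm
      _ = ∑' m : ℕ, uu (m + 1) * Real.sin (((m : ℝ) + 1) * t) / (((m : ℝ) + 1) * t) := by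
          rw [hstep1]
  · -- the partial sums do not converge
    rintro ⟨L, hL⟩
    have hmono : ∀ k : ℕ, k ≤ 2 ^ (k + 4) - 2 := by
      intro k
      have := Nat.lt_two_pow_self (n := k + 4)
      omega
    have h1 : Tendsto (fun k : ℕ => 2 ^ (k + 4) - 2) atTop atTop :=
      tendsto_atTop_mono hmono tendsto_id
    have h2 : Tendsto (fun k : ℕ => 2 ^ (k + 4) - 1) atTop atTop :=
      tendsto_atTop_mono (fun k => (hmono k).trans (by omega)) tendsto_id
    have hA := hL.comp h1
    have hB := hL.comp h2
    have hdiff := hB.sub hA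
    rw [sub_self] at hdiff
    have heq : ∀ k : ℕ, (∑ m ∈ Finset.Icc 1 (2 ^ (k + 4) - 1), uu m)
        - (∑ m ∈ Finset.Icc 1 (2 ^ (k + 4) - 2), uu m) = uu (2 ^ (k + 4) - 1) := by
      intro k
      have h16 := hV16 k
      have hstep : (2 : ℕ) ^ (k + 4) - 1 = (2 ^ (k + 4) - 2) + 1 := by omega
      rw [hstep, Finset.sum_Icc_succ_top (by omega : 1 ≤ 2 ^ (k + 4) - 2 + 1)]
      ring
    have hdiff' : Tendsto (fun k : ℕ => uu (2 ^ (k + 4) - 1)) atTop (𝓝 0) := by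
      refine hdiff.congr fun k => ?_
      exact heq k
    have habs : Tendsto (fun k : ℕ => |uu (2 ^ (k + 4) - 1)|) atTop (𝓝 0) := by
      have := hdiff'.abs
      rwa [abs_zero] at this
    have hlt := habs.eventually_lt_const (by norm_num : (0 : ℝ) < 1 / 2)
    obtain ⟨k, hk⟩ := hlt.exists
    have hval : |uu (2 ^ (k + 4) - 1)| ≥ 1 / 2 := by
      have hV : (16 : ℝ) ≤ (2 : ℝ) ^ (k + 4) := by
        have := hV16 k
        exact_mod_cast (by exact_mod_cast this : (16 : ℝ) ≤ ((2 ^ (k + 4) : ℕ) : ℝ))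
      rw [uu, uL_eval, uR_at_lo, add_zero, abs_div, abs_neg]
      rw [abs_of_nonneg (by linarith), abs_of_nonneg (by linarith)]
      rw [ge_iff_le, div_le_div_iff₀ (by norm_num) (by linarith)]
      linarith
    linarith
end

section
/- Let f : ℝ → ℂ be 2π-periodic, continuous, |f| ≡ 1, satisfying the integrated smoothness condition ∫₀^{2π} |f(s+t) − f(s)|³ ds = o(t) as t → 0⁺ (i.e. f ∈ λ^3_{1/3}). Then lim_{t→0⁺} ∑_{n∈ℤ} |a_n|² (sin nt)/t = deg f. -/
open MeasureTheory Real Complex Filter Asymptotics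

section KahaneAux
open AddCircle

noncomputable instance inst_s12 : Fact (0 < 2 * Real.pi) := ⟨Real.two_pi_pos⟩

lemma fourier_eq_exp (n : ℤ) (x : ℝ) :
    fourier (T := 2*Real.pi) (-n) (x : AddCircle (2*Real.pi)) = Complex.exp (-(n:ℂ) * Complex.I * x) := by
  rw [fourier_coe_apply]
  congr 1
  have : (2*Real.pi : ℂ) ≠ 0 := by
    simp [Real.pi_ne_zero, Complex.ofReal_ne_zero]
  field_simp
  push_cast
  ring

-- my fourierCoef as mathlib fourierCoeff of a lift
lemma fourierCoef_eq {g : ℝ → ℂ} (G : C(AddCircle (2*Real.pi), ℂ))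
    (hG : ∀ x : ℝ, G (x : AddCircle (2*Real.pi)) = g x) (n : ℤ) :
    fourierCoeff (⇑G) n = fourierCoef g n := by
  rw [fourierCoeff_eq_intervalIntegral (⇑G) n 0, fourierCoef]
  rw [zero_add]
  have : ∀ x : ℝ, fourier (T := 2*Real.pi) (-n) (x : AddCircle (2*Real.pi)) • G (x : AddCircle (2*Real.pi))
      = g x * Complex.exp (-(n:ℂ) * Complex.I * x) := by
    intro x
    rw [smul_eq_mul, fourier_eq_exp, hG, mul_comm]
  rw [intervalIntegral.integral_congr (fun x _ => this x)]
  simp [smul_eq_mul]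

-- shift lemma at the level of fourierCoef
lemma fourierCoef_shift {g : ℝ → ℂ} (hg : Continuous g) (hp : Function.Periodic g (2*Real.pi))
    (t : ℝ) (n : ℤ) :
    fourierCoef (fun s => g (s + t)) n = Complex.exp ((n:ℂ) * t * Complex.I) * fourierCoef g n := by
  unfold fourierCoef
  have hker : Continuous fun x : ℝ => Complex.exp (-(n:ℂ) * Complex.I * x) := by
    fun_prop
  set K : ℝ → ℂ := fun x => g x * Complex.exp (-(n:ℂ) * Complex.I * x) with hK
  have hKper : Function.Periodic K (2*Real.pi) := by
    intro x
    simp only [hK]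
    rw [hp x]
    congr 1
    rw [show (-(n:ℂ) * Complex.I * ((x + 2*Real.pi : ℝ) : ℂ))
        = -(n:ℂ) * Complex.I * (x:ℂ) + ((-n : ℤ) : ℂ) * (2 * (Real.pi:ℂ) * Complex.I) by
      push_cast; ring]
    rw [Complex.exp_add, Complex.exp_int_mul_two_pi_mul_I, mul_one]
  have hKcont : Continuous K := hg.mul hker
  have key : (∫ x in (0:ℝ)..(2*Real.pi), g (x + t) * Complex.exp (-(n:ℂ) * Complex.I * x))
      = Complex.exp ((n:ℂ) * t * Complex.I) * ∫ x in (0:ℝ)..(2*Real.pi), K x := by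
    have step1 : ∀ x : ℝ, g (x + t) * Complex.exp (-(n:ℂ) * Complex.I * x)
        = Complex.exp ((n:ℂ) * t * Complex.I) * K (x + t) := by
      intro x
      simp only [hK]
      rw [show Complex.exp ((n:ℂ) * t * Complex.I) * (g (x+t) * Complex.exp (-(n:ℂ) * Complex.I * ((x + t : ℝ) : ℂ)))
          = g (x+t) * Complex.exp ((n:ℂ) * t * Complex.I + -(n:ℂ) * Complex.I * ((x + t : ℝ) : ℂ)) by
        rw [Complex.exp_add]; ring]
      congr 2
      push_cast
      ring
    rw [intervalIntegral.integral_congr (fun x _ => step1 x)]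
    rw [intervalIntegral.integral_const_mul]
    congr 1
    rw [intervalIntegral.integral_comp_add_right (fun x => K x) t]
    have := hKper.intervalIntegral_add_eq t 0
    rw [zero_add] at this
    rw [zero_add, add_comm (2*Real.pi) t, this]
  rw [key]
  ring
-- lift continuous periodic function
noncomputable def cLift {g : ℝ → ℂ} (hg : Continuous g) (hp : Function.Periodic g (2*Real.pi)) :
    C(AddCircle (2*Real.pi), ℂ) :=
  ⟨hp.lift, continuous_coinduced_dom.mpr hg⟩

@[simp] lemma cLift_coe {g : ℝ → ℂ} (hg : Continuous g) (hp : Function.Periodic g (2*Real.pi))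
    (x : ℝ) : cLift hg hp (x : AddCircle (2*Real.pi)) = g x := rfl

-- haar integral to interval integral
lemma haar_int (G : C(AddCircle (2*Real.pi), ℂ)) :
    ∫ x, G x ∂(haarAddCircle) = (1/(2*Real.pi) : ℂ) • ∫ x in (0:ℝ)..(2*Real.pi), G (x : AddCircle (2*Real.pi)) := by
  have h := fourierCoeff_eq_intervalIntegral (T := 2*Real.pi) (⇑G) 0 0
  simp only [neg_zero, fourier_zero, one_smul, zero_add, fourierCoeff] at h
  rw [h]
  norm_num

-- Parseval (inner form)
lemma parseval_inner (F G : C(AddCircle (2*Real.pi), ℂ)) :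
    HasSum (fun n : ℤ => (starRingEnd ℂ) (fourierCoeff (⇑F) n) * fourierCoeff (⇑G) n)
      (∫ x, (starRingEnd ℂ) (F x) * G x ∂(haarAddCircle)) := by
  set F' := ContinuousMap.toLp (E := ℂ) 2 haarAddCircle ℂ F
  set G' := ContinuousMap.toLp (E := ℂ) 2 haarAddCircle ℂ G
  have h := lp.hasSum_inner (𝕜 := ℂ) (fourierBasis.repr F') (fourierBasis.repr G')
  have h2 : (inner ℂ (fourierBasis.repr F') (fourierBasis.repr G') : ℂ) = inner ℂ F' G' :=
    fourierBasis.repr.inner_map_map F' G'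
  rw [h2] at h
  have h3 : (inner ℂ F' G' : ℂ) = ∫ x, (starRingEnd ℂ) (F x) * G x ∂haarAddCircle := by
    rw [MeasureTheory.L2.inner_def]
    apply integral_congr_ae
    filter_upwards [ContinuousMap.coeFn_toAEEqFun haarAddCircle F,
      ContinuousMap.coeFn_toAEEqFun haarAddCircle G] with x hF hG
    simp only [RCLike.inner_apply']
    exact congrArg₂ (fun a b => (starRingEnd ℂ) a * b) hF hG
  rw [h3] at h
  have hF : ∀ n : ℤ, fourierBasis.repr F' n = fourierCoeff (⇑F) n := fun n => by
    rw [fourierBasis_repr, fourierCoeff_toLp]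
  have hG : ∀ n : ℤ, fourierBasis.repr G' n = fourierCoeff (⇑G) n := fun n => by
    rw [fourierBasis_repr, fourierCoeff_toLp]
  convert h using 2 with n
  · rfl
  rw [RCLike.inner_apply', hF, hG]

-- Key identity: autocorrelation as sum over squared Fourier coefficients
lemma key_identity {f : ℝ → ℂ} (hcont : Continuous f)
    (hper : Function.Periodic f (2*Real.pi)) (t : ℝ) :
    HasSum (fun n : ℤ => ((‖fourierCoef f n‖ : ℂ))^2 * Complex.exp ((n:ℂ) * t * Complex.I))
      ((1/(2*Real.pi) : ℂ) * ∫ s in (0:ℝ)..(2*Real.pi), (starRingEnd ℂ) (f s) * f (s + t)) := by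
  have hgc : Continuous fun s => f (s + t) := hcont.comp (continuous_id.add continuous_const)
  have hgp : Function.Periodic (fun s => f (s + t)) (2*Real.pi) := fun x => by
    simp only [add_right_comm x (2*Real.pi) t]
    exact hper (x + t)
  set F := cLift hcont hper with hF
  set G := cLift hgc hgp with hG
  have h := parseval_inner F G
  -- rewrite the integral
  have hH : ∫ x, (starRingEnd ℂ) (F x) * G x ∂(haarAddCircle)
      = (1/(2*Real.pi) : ℂ) * ∫ s in (0:ℝ)..(2*Real.pi), (starRingEnd ℂ) (f s) * f (s + t) := by
    have := haar_int ⟨fun x => (starRingEnd ℂ) (F x) * G x,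
      (Complex.continuous_conj.comp F.continuous).mul G.continuous⟩
    simp only [ContinuousMap.coe_mk] at this
    rw [this, smul_eq_mul]
    rfl
  rw [hH] at h
  -- rewrite the summand
  have hsummand : ∀ n : ℤ, (starRingEnd ℂ) (fourierCoeff (⇑F) n) * fourierCoeff (⇑G) n
      = ((‖fourierCoef f n‖ : ℂ))^2 * Complex.exp ((n:ℂ) * t * Complex.I) := by
    intro n
    rw [fourierCoef_eq (g := f) F (fun x => rfl) n,
      fourierCoef_eq (g := fun s => f (s + t)) G (fun x => rfl) n,
      fourierCoef_shift hcont hper t n]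
    rw [show (starRingEnd ℂ) (fourierCoef f n) * (Complex.exp ((n:ℂ) * t * Complex.I) * fourierCoef f n)
        = (fourierCoef f n * (starRingEnd ℂ) (fourierCoef f n)) * Complex.exp ((n:ℂ) * t * Complex.I) by ring]
    rw [Complex.mul_conj']
  rw [funext hsummand] at h
  exact h

lemma tendsto_Icc_atTop : Tendsto (fun N : ℕ => Finset.Icc (-(N:ℤ)) (N:ℤ)) atTop atTop := by
  apply Filter.tendsto_atTop_finset_of_monotone
  · intro a b hab
    apply Finset.Icc_subset_Icc <;> omega
  · intro x
    exact ⟨x.natAbs, by simp only [Finset.mem_Icc]; exact ⟨by simpa using neg_abs_le x, by simpa using le_abs_self x⟩⟩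

lemma partA {f : ℝ → ℂ} (hcont : Continuous f) (hper : Function.Periodic f (2*Real.pi))
    (t : ℝ) :
    Tendsto (fun N : ℕ => ∑ n ∈ Finset.Icc (-(N:ℤ)) (N:ℤ),
        ‖fourierCoef f n‖ ^ 2 * Real.sin ((n:ℝ) * t) / t)
      atTop (nhds (((1/(2*Real.pi) : ℂ) *
        ∫ s in (0:ℝ)..(2*Real.pi), (starRingEnd ℂ) (f s) * f (s + t)).im / t)) := by
  have h0 := key_identity hcont hper t
  have h1 := Complex.imCLM.hasSum h0
  have h := h1.div_const t
  have hsummand : ∀ n : ℤ,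
      Complex.imCLM (((‖fourierCoef f n‖ : ℂ))^2 * Complex.exp ((n:ℂ) * t * Complex.I)) / t
      = ‖fourierCoef f n‖ ^ 2 * Real.sin ((n:ℝ) * t) / t := by
    intro n
    have h2 : ((n:ℂ) * t * Complex.I) = (((n:ℝ) * t : ℝ) : ℂ) * Complex.I := by push_cast; ring
    rw [Complex.imCLM_apply, h2,
      show ((‖fourierCoef f n‖ : ℂ))^2 = ((‖fourierCoef f n‖^2 : ℝ) : ℂ) by push_cast; ring,
      Complex.im_ofReal_mul]
    congr 2
    simp only [Complex.exp_mul_I, Complex.add_im, Complex.mul_im, Complex.I_re, Complex.I_im,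
      mul_zero, mul_one, zero_add]
    rw [Complex.cos_ofReal_im, Complex.sin_ofReal_re]
    ring
  rw [funext hsummand] at h
  have h' : Tendsto (fun s : Finset ℤ => ∑ n ∈ s, ‖fourierCoef f n‖ ^ 2 * Real.sin ((n:ℝ) * t) / t)
      atTop (nhds (((1/(2*Real.pi) : ℂ) *
        ∫ s in (0:ℝ)..(2*Real.pi), (starRingEnd ℂ) (f s) * f (s + t)).im / t)) := h
  exact h'.comp tendsto_Icc_atTop

-- norm of exp(ix) - 1
lemma abs_exp_sub_one (x : ℝ) :
    ‖Complex.exp ((x:ℂ) * Complex.I) - 1‖ = 2 * |Real.sin (x/2)| := by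
  have key : Complex.exp ((x:ℂ) * Complex.I) - 1
      = Complex.exp ((↑(x/2) : ℂ) * Complex.I) * (2 * Complex.I * Complex.sin ((↑(x/2) : ℂ))) := by
    have hs : Complex.sin ((↑(x/2) : ℂ))
        = (Complex.exp (-(↑(x/2):ℂ) * Complex.I) - Complex.exp ((↑(x/2):ℂ) * Complex.I)) * Complex.I / 2 := by
      rw [Complex.sin]
    rw [hs]
    have e1 : Complex.exp ((↑(x/2):ℂ) * Complex.I) * Complex.exp ((↑(x/2):ℂ) * Complex.I)
        = Complex.exp ((x:ℂ) * Complex.I) := by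
      rw [← Complex.exp_add]; congr 1; push_cast; ring
    have e2 : Complex.exp ((↑(x/2):ℂ) * Complex.I) * Complex.exp (-(↑(x/2):ℂ) * Complex.I) = 1 := by
      rw [← Complex.exp_add, show ((↑(x/2):ℂ) * Complex.I + -(↑(x/2):ℂ) * Complex.I) = 0 by ring,
        Complex.exp_zero]
    linear_combination (-1 : ℂ) * e1 + e2 +
      (Complex.exp ((↑(x/2):ℂ) * Complex.I) * Complex.exp ((↑(x/2):ℂ) * Complex.I)
        - Complex.exp ((↑(x/2):ℂ) * Complex.I) * Complex.exp (-(↑(x/2):ℂ) * Complex.I)) * Complex.I_mul_I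
  rw [key, norm_mul, Complex.norm_exp_ofReal_mul_I, one_mul, norm_mul, norm_mul,
    Complex.norm_two, Complex.norm_I, mul_one, ← Complex.ofReal_sin, Complex.norm_real, Real.norm_eq_abs]

-- |sin x - x| ≤ |x|^3/4 for |x| ≤ 1
lemma abs_sin_sub_le (x : ℝ) (hx : |x| ≤ 1) : |Real.sin x - x| ≤ |x|^3 / 4 := by
  rcases le_or_gt 0 x with h | h
  · rcases eq_or_lt_of_le h with rfl | h'
    · simp
    have h1 : Real.sin x ≤ x := Real.sin_le h
    have h2 : x - x^3/4 < Real.sin x := by have := Real.sin_gt_sub_cube h'; nlinarith [pow_pos h' 3]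
    rw [_root_.abs_of_nonpos (by linarith : Real.sin x - x ≤ 0), _root_.abs_of_nonneg h]
    linarith
  · have hx' : |(-x)| ≤ 1 := by rwa [abs_neg]
    have h1 : Real.sin (-x) ≤ -x := Real.sin_le (by linarith)
    have h2 : -x - (-x)^3/4 < Real.sin (-x) :=
      by have := Real.sin_gt_sub_cube (by linarith : (0:ℝ) < -x); nlinarith [pow_pos (by linarith : (0:ℝ) < -x) 3]
    rw [Real.sin_neg] at h1 h2
    rw [_root_.abs_of_nonneg (by linarith : (0:ℝ) ≤ Real.sin x - x), _root_.abs_of_neg h]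
    nlinarith

-- main pointwise bound
lemma sin_sub_bound (x : ℝ) (hx : |x| ≤ 1) :
    |Real.sin x - x| ≤ Real.pi^3/32 * (‖Complex.exp ((x:ℂ) * Complex.I) - 1‖)^3 := by
  have h1 : |x| ≤ Real.pi * |Real.sin (x/2)| := by
    have := Real.mul_abs_le_abs_sin (x := x/2) (by
      rw [abs_div]
      have : (1:ℝ) ≤ Real.pi := by linarith [Real.pi_gt_three]
      rw [_root_.abs_of_pos (by norm_num : (0:ℝ) < 2)]
      calc |x|/2 ≤ 1/2 := by linarith
        _ ≤ Real.pi/2 := by linarith)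
    have hpi : (0:ℝ) < Real.pi := Real.pi_pos
    rw [abs_div, _root_.abs_of_pos (by norm_num : (0:ℝ) < 2)] at this
    calc |x| = Real.pi * (2/Real.pi * (|x|/2)) := by field_simp
    _ ≤ Real.pi * |Real.sin (x/2)| := by
        apply mul_le_mul_of_nonneg_left this hpi.le
  have h2 : |x|^3 ≤ Real.pi^3 * |Real.sin (x/2)|^3 := by
    calc |x|^3 ≤ (Real.pi * |Real.sin (x/2)|)^3 := by
          apply pow_le_pow_left₀ (abs_nonneg x) h1
      _ = Real.pi^3 * |Real.sin (x/2)|^3 := by ring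
  rw [abs_exp_sub_one]
  calc |Real.sin x - x| ≤ |x|^3/4 := abs_sin_sub_le x hx
    _ ≤ Real.pi^3 * |Real.sin (x/2)|^3 / 4 := by linarith
    _ = Real.pi^3/32 * (2 * |Real.sin (x/2)|)^3 := by ring

lemma avg_tendsto {g : ℝ → ℝ} (hg : Continuous g) (a : ℝ) :
    Filter.Tendsto (fun t => (∫ u in a..(a+t), g u) / t) (nhdsWithin 0 (Set.Ioi 0)) (nhds (g a)) := by
  have hd : HasDerivAt (fun x => ∫ u in a..x, g u) (g a) a :=
    intervalIntegral.integral_hasDerivAt_right (hg.intervalIntegrable a a)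
      (hg.stronglyMeasurable.stronglyMeasurableAtFilter) hg.continuousAt
  have hs := hasDerivAt_iff_tendsto_slope.mp hd
  have hmap : Filter.Tendsto (fun t : ℝ => a + t) (nhdsWithin 0 (Set.Ioi 0)) (nhdsWithin a {a}ᶜ) := by
    rw [tendsto_nhdsWithin_iff]
    constructor
    · have : Filter.Tendsto (fun t : ℝ => a + t) (nhds 0) (nhds (a + 0)) :=
        (continuous_const.add continuous_id).tendsto 0
      rw [add_zero] at this
      exact this.mono_left nhdsWithin_le_nhds
    · filter_upwards [self_mem_nhdsWithin] with t (ht : t ∈ Set.Ioi 0)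
      simp only [Set.mem_compl_iff, Set.mem_singleton_iff]
      intro hc
      have : t = 0 := by linarith
      exact absurd this (ne_of_gt ht)
  have hcomp := hs.comp hmap
  apply hcomp.congr
  intro t
  simp only [Function.comp_apply, slope_def_field, intervalIntegral.integral_same]
  rw [sub_zero, add_sub_cancel_left]

lemma partB (f : ℝ → ℂ) (φ : ℝ → ℝ)
    (hsmooth : (fun t : ℝ => ∫ s in (0:ℝ)..(2 * Real.pi), ‖f (s + t) - f s‖ ^ 3)
      =o[nhdsWithin 0 (Set.Ioi 0)] (fun t : ℝ => t))
    (hφ : Continuous φ) (hlift : ∀ t, f t = Complex.exp ((φ t : ℂ) * Complex.I)) :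
    Filter.Tendsto (fun t : ℝ => ((1/(2*Real.pi) : ℂ) *
        ∫ s in (0:ℝ)..(2*Real.pi), (starRingEnd ℂ) (f s) * f (s + t)).im / t)
      (nhdsWithin 0 (Set.Ioi 0))
      (nhds ((φ (2 * Real.pi) - φ 0) / (2 * Real.pi))) := by
  have pi_pos := Real.pi_pos
  -- the complex integrand in terms of φ
  have hptwise : ∀ t s : ℝ, (starRingEnd ℂ) (f s) * f (s + t)
      = Complex.exp ((↑(φ (s+t) - φ s) : ℂ) * Complex.I) := by
    intro t s
    rw [hlift, hlift, ← Complex.exp_conj]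
    rw [← Complex.exp_add]
    congr 1
    simp only [map_mul, Complex.conj_ofReal, Complex.conj_I]
    push_cast
    ring
  -- imaginary part of the integral
  have him : ∀ t : ℝ, ((1/(2*Real.pi) : ℂ) *
      ∫ s in (0:ℝ)..(2*Real.pi), (starRingEnd ℂ) (f s) * f (s + t)).im
      = (1/(2*Real.pi)) * ∫ s in (0:ℝ)..(2*Real.pi), Real.sin (φ (s+t) - φ s) := by
    intro t
    rw [show ((1/(2*Real.pi) : ℂ)) = ((1/(2*Real.pi) : ℝ) : ℂ) by push_cast; ring]
    rw [Complex.im_ofReal_mul]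
    congr 1
    have hint : IntervalIntegrable (fun s => (starRingEnd ℂ) (f s) * f (s + t)) volume 0 (2*Real.pi) := by
      apply Continuous.intervalIntegrable
      have hc : Continuous f := by
        rw [show f = fun t => Complex.exp ((φ t : ℂ) * Complex.I) from funext hlift]
        fun_prop
      exact (Complex.continuous_conj.comp hc).mul (hc.comp (continuous_id.add continuous_const))
    rw [show ((∫ s in (0:ℝ)..(2*Real.pi), (starRingEnd ℂ) (f s) * f (s + t)).im)
        = Complex.imCLM (∫ s in (0:ℝ)..(2*Real.pi), (starRingEnd ℂ) (f s) * f (s + t)) from rfl,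
      ← ContinuousLinearMap.intervalIntegral_comp_comm Complex.imCLM hint]
    apply intervalIntegral.integral_congr
    intro s _
    show Complex.imCLM ((starRingEnd ℂ) (f s) * f (s + t)) = Real.sin (φ (s + t) - φ s)
    rw [hptwise t s, Complex.imCLM_apply]
    simp only [Complex.exp_mul_I, Complex.add_im, Complex.mul_im, Complex.I_re, Complex.I_im,
      mul_zero, mul_one, zero_add, Complex.cos_ofReal_im, Complex.sin_ofReal_re]
    ring
  simp only [him]
  -- integrability helpers
  have hφint : ∀ a b : ℝ, IntervalIntegrable φ volume a b := fun a b => hφ.intervalIntegrable a b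
  have hφshift : ∀ t : ℝ, Continuous (fun s => φ (s + t)) :=
    fun t => hφ.comp (continuous_id.add continuous_const)
  -- decomposition of the sine integral
  set D : ℝ → ℝ := fun t => ∫ s in (0:ℝ)..(2*Real.pi), (φ (s+t) - φ s) with hD
  set R : ℝ → ℝ := fun t => ∫ s in (0:ℝ)..(2*Real.pi), (Real.sin (φ (s+t) - φ s) - (φ (s+t) - φ s)) with hR
  have hsplit : ∀ t : ℝ, (∫ s in (0:ℝ)..(2*Real.pi), Real.sin (φ (s+t) - φ s)) = R t + D t := by
    intro t
    simp only [hR, hD]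
    rw [← intervalIntegral.integral_add]
    · apply intervalIntegral.integral_congr
      intro s _
      ring
    · apply Continuous.intervalIntegrable
      exact (Real.continuous_sin.comp ((hφshift t).sub hφ)).sub ((hφshift t).sub hφ)
    · exact ((hφshift t).sub hφ).intervalIntegrable 0 (2*Real.pi)
  -- limit of D t / t
  have hDlim : Filter.Tendsto (fun t => D t / t) (nhdsWithin 0 (Set.Ioi 0))
      (nhds (φ (2*Real.pi) - φ 0)) := by
    have hDeq : ∀ t : ℝ, D t = (∫ u in (2*Real.pi)..(2*Real.pi + t), φ u) - ∫ u in (0:ℝ)..t, φ u := by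
      intro t
      simp only [hD]
      rw [intervalIntegral.integral_sub (((hφshift t).intervalIntegrable 0 (2*Real.pi))) (hφint 0 (2*Real.pi))]
      rw [intervalIntegral.integral_comp_add_right φ t, zero_add]
      have A := intervalIntegral.integral_add_adjacent_intervals (hφint t (2*Real.pi)) (hφint (2*Real.pi) (2*Real.pi + t))
      have B := intervalIntegral.integral_add_adjacent_intervals (hφint 0 t) (hφint t (2*Real.pi))
      linarith
    simp only [hDeq, sub_div]
    have h1 := avg_tendsto hφ (2*Real.pi)
    have h2 := avg_tendsto hφ 0
    simp only [zero_add] at h2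
    exact h1.sub h2
  -- limit of R t / t
  have hRlim : Filter.Tendsto (fun t => R t / t) (nhdsWithin 0 (Set.Ioi 0)) (nhds 0) := by
    -- uniform continuity to get smallness of increments
    obtain ⟨δ, hδpos, hδ⟩ := (Metric.uniformContinuousOn_iff.mp
      ((isCompact_Icc (a := (0:ℝ)) (b := 2*Real.pi + 1)).uniformContinuousOn_of_continuous
        hφ.continuousOn)) 1 one_pos
    set δ' := min δ 1 with hδ'
    have hδ'pos : 0 < δ' := lt_min hδpos one_pos
    have hnorm : ∀ t s : ℝ, ‖f (s+t) - f s‖ = ‖Complex.exp ((↑(φ (s+t) - φ s) : ℂ) * Complex.I) - 1‖ := by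
      intro t s
      have : f (s+t) - f s = Complex.exp ((↑(φ s) : ℂ) * Complex.I) *
          (Complex.exp ((↑(φ (s+t) - φ s) : ℂ) * Complex.I) - 1) := by
        rw [hlift, hlift, mul_sub, mul_one, ← Complex.exp_add]
        congr 2
        push_cast
        ring
      rw [this, norm_mul, Complex.norm_exp_ofReal_mul_I, one_mul]
    have hbound : ∀ᶠ t in nhdsWithin (0:ℝ) (Set.Ioi 0),
        |R t / t| ≤ (Real.pi^3/32) * ((∫ s in (0:ℝ)..(2*Real.pi), ‖f (s + t) - f s‖ ^ 3) / t) := by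
      filter_upwards [Ioo_mem_nhdsGT hδ'pos] with t ht
      obtain ⟨ht0, htδ⟩ := ht
      have hsmall : ∀ s ∈ Set.Icc (0:ℝ) (2*Real.pi), |φ (s+t) - φ s| ≤ 1 := by
        intro s hs
        have h1 : s ∈ Set.Icc (0:ℝ) (2*Real.pi + 1) := ⟨hs.1, by linarith [hs.2]⟩
        have h2 : s + t ∈ Set.Icc (0:ℝ) (2*Real.pi + 1) := by
          constructor
          · linarith [hs.1, ht0.le]
          · have : t ≤ 1 := le_of_lt (lt_of_lt_of_le htδ (min_le_right δ 1))
            linarith [hs.2]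
        have := hδ (s+t) h2 s h1 (by
          rw [Real.dist_eq]
          have : |s + t - s| = t := by rw [show s + t - s = t by ring, _root_.abs_of_pos ht0]
          rw [this]
          exact lt_of_lt_of_le htδ (min_le_left δ 1))
        rw [Real.dist_eq] at this
        exact this.le
      have hRb : |R t| ≤ (Real.pi^3/32) * ∫ s in (0:ℝ)..(2*Real.pi), ‖f (s + t) - f s‖ ^ 3 := by
        simp only [hR]
        calc |∫ s in (0:ℝ)..(2*Real.pi), (Real.sin (φ (s+t) - φ s) - (φ (s+t) - φ s))|
            ≤ ∫ s in (0:ℝ)..(2*Real.pi), |Real.sin (φ (s+t) - φ s) - (φ (s+t) - φ s)| :=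
              intervalIntegral.abs_integral_le_integral_abs (by positivity)
          _ ≤ ∫ s in (0:ℝ)..(2*Real.pi), (Real.pi^3/32) * ‖f (s + t) - f s‖ ^ 3 := by
              apply intervalIntegral.integral_mono_on (by positivity)
              · apply Continuous.intervalIntegrable
                exact ((Real.continuous_sin.comp ((hφshift t).sub hφ)).sub ((hφshift t).sub hφ)).abs
              · apply Continuous.intervalIntegrable
                have hc : Continuous f := by
                  rw [show f = fun t => Complex.exp ((φ t : ℂ) * Complex.I) from funext hlift]
                  fun_prop
                exact continuous_const.mul (((hc.comp (continuous_id.add continuous_const)).sub hc).norm.pow 3)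
              · intro s hs
                have h1 := sin_sub_bound (φ (s+t) - φ s) (hsmall s hs)
                rw [← hnorm t s] at h1
                exact h1
          _ = (Real.pi^3/32) * ∫ s in (0:ℝ)..(2*Real.pi), ‖f (s + t) - f s‖ ^ 3 := by
              rw [intervalIntegral.integral_const_mul]
      rw [abs_div, _root_.abs_of_pos ht0, div_le_iff₀ ht0]
      calc |R t| ≤ (Real.pi^3/32) * ∫ s in (0:ℝ)..(2*Real.pi), ‖f (s + t) - f s‖ ^ 3 := hRb
        _ = (Real.pi^3/32) * ((∫ s in (0:ℝ)..(2*Real.pi), ‖f (s + t) - f s‖ ^ 3) / t) * t := by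
            field_simp

    have hsm := hsmooth.tendsto_div_nhds_zero
    have : Filter.Tendsto (fun t => (Real.pi^3/32) * ((∫ s in (0:ℝ)..(2*Real.pi), ‖f (s + t) - f s‖ ^ 3) / t))
        (nhdsWithin 0 (Set.Ioi 0)) (nhds 0) := by
      have := hsm.const_mul (Real.pi^3/32)
      rwa [mul_zero] at this
    apply squeeze_zero_norm' _ this
    filter_upwards [hbound] with t ht
    exact ht
  -- combine
  have : Filter.Tendsto (fun t => (1/(2*Real.pi)) * (R t / t + D t / t)) (nhdsWithin 0 (Set.Ioi 0))
      (nhds ((1/(2*Real.pi)) * (0 + (φ (2*Real.pi) - φ 0)))) := by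
    exact ((hRlim.add hDlim).const_mul _)
  rw [zero_add, show (1/(2*Real.pi)) * (φ (2*Real.pi) - φ 0) = (φ (2*Real.pi) - φ 0)/(2*Real.pi) by ring] at this
  apply this.congr
  intro t
  rw [hsplit t]
  ring

end KahaneAux

/-- For a continuous unimodular loop in Zygmund's class `λ³_{1/3}`, i.e. with
`∫ |f(s+t) − f(s)|³ ds = o(t)` as `t → 0⁺`, the Riemann `(R,1)` means of
`∑ n |a_n|²` converge to the winding number (given by a continuous lift `φ`). -/
theorem kahane_zygmund_class_riemann_sum (f : ℝ → ℂ) (φ : ℝ → ℝ)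
    (hcont : Continuous f)
    (hper : Function.Periodic f (2 * Real.pi))
    (hmod : ∀ t, ‖f t‖ = 1)
    (hsmooth : (fun t : ℝ => ∫ s in (0:ℝ)..(2 * Real.pi), ‖f (s + t) - f s‖ ^ 3)
      =o[nhdsWithin 0 (Set.Ioi 0)] (fun t : ℝ => t))
    (hφ : Continuous φ) (hlift : ∀ t, f t = Complex.exp ((φ t : ℂ) * Complex.I)) :
    ∃ L : ℝ → ℝ,
      (∀ t : ℝ, 0 < t →
        Tendsto (fun N : ℕ =>
            ∑ n ∈ Finset.Icc (-(N : ℤ)) (N : ℤ),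
              ‖fourierCoef f n‖ ^ 2 * Real.sin ((n : ℝ) * t) / t)
          atTop (nhds (L t))) ∧
      Tendsto L (nhdsWithin 0 (Set.Ioi 0))
        (nhds ((φ (2 * Real.pi) - φ 0) / (2 * Real.pi))) := by
  exact ⟨fun t => ((1/(2*Real.pi) : ℂ) *
      ∫ s in (0:ℝ)..(2*Real.pi), (starRingEnd ℂ) (f s) * f (s + t)).im / t,
    fun t _ => partA hcont hper t, partB f φ hsmooth hφ hlift⟩
end
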